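/- arXiv:2211.08786 — 8 statements merged into one kernel-verified Lean document; each statement's English description precedes it below -/
import Mathlib

section
/- Let n ≥ 1, C ∈ ℝ^{1×n}, θ ∈ ℝ, let 𝒜 : ℝ → ℝ^{n×n} be continuous, X a fundamental solution with transition matrix Φ(t,s) = X(s)X(t)⁻¹, and let S : [t₀,∞) → ℝ^{n×n} be differentiable with S(t₀) = S₀ and S'(t) = −𝒜(t)ᵀS(t) − S(t)𝒜(t) − θS(t) + CᵀC for all t ≥ t₀. Then for every t ≥ t₀, S(t) = e^{−θ(t−t₀)} Φ(t,t₀)ᵀ S₀ Φ(t,t₀) + ∫_{t₀}^{t} e^{−θ(t−s)} Φ(t,s)ᵀ CᵀC Φ(t,s) ds (variation of constants formula). -/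
open Matrix Set

private lemma matDerivMul {n : ℕ} {f g : ℝ → Matrix (Fin n) (Fin n) ℝ}
    {A' B' : Matrix (Fin n) (Fin n) ℝ} {s : Set ℝ} {t : ℝ}
    (hf : ∀ k l, HasDerivWithinAt (fun τ => f τ k l) (A' k l) s t)
    (hg : ∀ k l, HasDerivWithinAt (fun τ => g τ k l) (B' k l) s t)
    (i j : Fin n) :
    HasDerivWithinAt (fun τ => (f τ * g τ) i j) ((A' * g t + f t * B') i j) s t := by
  simp only [Matrix.mul_apply, Matrix.add_apply]
  rw [← Finset.sum_add_distrib]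
  exact HasDerivWithinAt.fun_sum fun k _ => (hf i k).mul (hg k j)

/-- Variation of constants formula for the Lyapunov differential equation
`S' = −𝒜ᵀS − S𝒜 − θS + CᵀC` on `[t₀,∞)`:
`S(t) = e^{−θ(t−t₀)} Φ(t,t₀)ᵀ S₀ Φ(t,t₀) + ∫_{t₀}^{t} e^{−θ(t−s)} Φ(t,s)ᵀ CᵀC Φ(t,s) ds`,
where `Φ(t,s) = X(s) X(t)⁻¹` is the transition matrix. -/
theorem lyapunov_variation_of_constants
    {n : ℕ} (hn : 1 ≤ n) (C : Matrix (Fin 1) (Fin n) ℝ) (θ : ℝ)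
    (𝒜 X : ℝ → Matrix (Fin n) (Fin n) ℝ)
    (h𝒜 : Continuous 𝒜)
    (hX : ∀ t : ℝ, ∀ i j, HasDerivAt (fun τ => X τ i j) ((𝒜 t * X t) i j) t)
    (hXinv : ∀ t : ℝ, IsUnit (X t))
    (t₀ : ℝ) (S : ℝ → Matrix (Fin n) (Fin n) ℝ) (S₀ : Matrix (Fin n) (Fin n) ℝ)
    (hS₀ : S t₀ = S₀)
    (hS : ∀ t ∈ Set.Ici t₀, ∀ i j, HasDerivWithinAt (fun τ => S τ i j)
      ((-(𝒜 t)ᵀ * S t - S t * 𝒜 t - θ • S t + Cᵀ * C) i j) (Set.Ici t₀) t) :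
    ∀ t ∈ Set.Ici t₀,
      S t = Real.exp (-θ * (t - t₀)) • ((X t₀ * (X t)⁻¹)ᵀ * S₀ * (X t₀ * (X t)⁻¹))
        + Matrix.of (fun i j => ∫ s in t₀..t,
            Real.exp (-θ * (t - s)) *
              (((X s * (X t)⁻¹)ᵀ * Cᵀ * C * (X s * (X t)⁻¹)) i j)) := by
  intro t ht
  have ht' : t₀ ≤ t := ht
  have hXc : Continuous X := continuous_matrix fun i j =>
    continuous_iff_continuousAt.2 fun τ => (hX τ i j).continuousAt
  set N : ℝ → Matrix (Fin n) (Fin n) ℝ := fun s => (X s)ᵀ * Cᵀ * C * X s with hN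
  have hNc : Continuous N :=
    ((hXc.matrix_transpose.matrix_mul continuous_const).matrix_mul continuous_const).matrix_mul hXc
  set g : ℝ → Matrix (Fin n) (Fin n) ℝ := fun s => Real.exp (θ * (s - t₀)) • N s with hg
  have hgc : ∀ k l, Continuous fun s => g s k l := by
    intro k l
    have : Continuous fun s => Real.exp (θ * (s - t₀)) * N s k l :=
      (Real.continuous_exp.comp (by continuity)).mul (hNc.matrix_elem k l)
    simpa [hg, Matrix.smul_apply, smul_eq_mul] using this
  -- derivative of τ ↦ exp(θ(τ-t₀)) * (XᵀSX)(τ) i j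
  have hFd : ∀ u ∈ Ici t₀, ∀ i j,
      HasDerivWithinAt (fun τ => Real.exp (θ * (τ - t₀)) * ((X τ)ᵀ * S τ * X τ) i j)
        (g u i j) (Ici t₀) u := by
    intro u hu i j
    have hXd : ∀ k l, HasDerivWithinAt (fun τ => X τ k l) ((𝒜 u * X u) k l) (Ici t₀) u :=
      fun k l => (hX u k l).hasDerivWithinAt
    have hXtd : ∀ k l, HasDerivWithinAt (fun τ => (X τ)ᵀ k l) (((𝒜 u * X u)ᵀ) k l) (Ici t₀) u :=
      fun k l => by simpa [Matrix.transpose_apply] using (hX u l k).hasDerivWithinAt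
    have h2 := matDerivMul (matDerivMul hXtd (hS u hu)) hXd i j
    have ha : HasDerivAt (fun τ : ℝ => θ * (τ - t₀)) θ u := by
      simpa using ((hasDerivAt_id u).sub_const t₀).const_mul θ
    have hE : HasDerivWithinAt (fun τ => Real.exp (θ * (τ - t₀)))
        (Real.exp (θ * (u - t₀)) * θ) (Ici t₀) u := ha.exp.hasDerivWithinAt
    have htot := hE.mul h2
    have hid : θ • ((X u)ᵀ * S u * X u) +
        (((𝒜 u * X u)ᵀ * S u + (X u)ᵀ * (-(𝒜 u)ᵀ * S u - S u * 𝒜 u - θ • S u + Cᵀ * C)) * X u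
          + ((X u)ᵀ * S u) * (𝒜 u * X u)) = N u := by
      rw [hN]
      simp only [Matrix.transpose_mul, Matrix.add_mul, Matrix.sub_mul, Matrix.neg_mul,
        Matrix.mul_add, Matrix.mul_sub, Matrix.mul_neg, Matrix.smul_mul, Matrix.mul_smul,
        Matrix.mul_assoc]
      abel
    have hval : Real.exp (θ * (u - t₀)) * θ * ((X u)ᵀ * S u * X u) i j
        + Real.exp (θ * (u - t₀)) *
          ((((𝒜 u * X u)ᵀ * S u + (X u)ᵀ * (-(𝒜 u)ᵀ * S u - S u * 𝒜 u - θ • S u + Cᵀ * C)) * X u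
            + ((X u)ᵀ * S u) * (𝒜 u * X u)) i j) = g u i j := by
      rw [hg]
      simp only [Matrix.smul_apply, smul_eq_mul]
      rw [← hid]
      simp only [Matrix.add_apply, Matrix.smul_apply, smul_eq_mul]
      ring
    rw [← hval]
    exact htot
  -- FTC
  have key : ∀ i j, (∫ s in t₀..t, g s i j)
      = Real.exp (θ * (t - t₀)) * ((X t)ᵀ * S t * X t) i j - ((X t₀)ᵀ * S t₀ * X t₀) i j := by
    intro i j
    have hcont : ContinuousOn
        (fun τ => Real.exp (θ * (τ - t₀)) * ((X τ)ᵀ * S τ * X τ) i j) (Icc t₀ t) :=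
      fun x hx => ((hFd x hx.1 i j).continuousWithinAt).mono Icc_subset_Ici_self
    have hderiv : ∀ x ∈ Ioo t₀ t, HasDerivWithinAt
        (fun τ => Real.exp (θ * (τ - t₀)) * ((X τ)ᵀ * S τ * X τ) i j) (g x i j) (Ioi x) x :=
      fun x hx => (((hFd x (le_of_lt hx.1) i j).hasDerivAt (Ici_mem_nhds hx.1)).hasDerivWithinAt)
    have := intervalIntegral.integral_eq_sub_of_hasDeriv_right_of_le ht' hcont hderiv
      ((hgc i j).intervalIntegrable _ _)
    simpa [sub_self, Real.exp_zero] using this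
  set M : Matrix (Fin n) (Fin n) ℝ := Matrix.of fun k l => ∫ s in t₀..t, g s k l with hM
  have hFt : (X t₀)ᵀ * S t₀ * X t₀ + M = Real.exp (θ * (t - t₀)) • ((X t)ᵀ * S t * X t) := by
    ext i j
    simp only [hM, Matrix.add_apply, Matrix.of_apply, Matrix.smul_apply, smul_eq_mul]
    rw [key i j]; ring
  set Y : Matrix (Fin n) (Fin n) ℝ := (X t)⁻¹ with hY
  have hXY : X t * Y = 1 := mul_nonsing_inv _ ((Matrix.isUnit_iff_isUnit_det _).1 (hXinv t))
  have hA : (Matrix.of fun i j => ∫ s in t₀..t,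
        Real.exp (-θ * (t - s)) * (((X s * Y)ᵀ * Cᵀ * C * (X s * Y)) i j))
      = Real.exp (-θ * (t - t₀)) • (Yᵀ * M * Y) := by
    ext i j
    simp only [Matrix.of_apply, Matrix.smul_apply, smul_eq_mul]
    have hpt : ∀ s : ℝ, Real.exp (-θ * (t - s)) * (((X s * Y)ᵀ * Cᵀ * C * (X s * Y)) i j)
        = ∑ l, ∑ k, (Yᵀ i k * Y l j * Real.exp (-θ * (t - t₀))) * g s k l := by
      intro s
      have h1 : (X s * Y)ᵀ * Cᵀ * C * (X s * Y) = Yᵀ * N s * Y := by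
        rw [hN]; simp only [Matrix.transpose_mul, Matrix.mul_assoc]
      have h2 : Real.exp (-θ * (t - s)) = Real.exp (-θ * (t - t₀)) * Real.exp (θ * (s - t₀)) := by
        rw [← Real.exp_add]; ring_nf
      rw [h1, h2, hg]
      simp only [Matrix.mul_apply, Matrix.smul_apply, smul_eq_mul, Finset.mul_sum,
        Finset.sum_mul]
      refine Finset.sum_congr rfl fun l _ => Finset.sum_congr rfl fun k _ => by ring
    calc (∫ s in t₀..t, Real.exp (-θ * (t - s)) * (((X s * Y)ᵀ * Cᵀ * C * (X s * Y)) i j))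
        = ∫ s in t₀..t, ∑ l, ∑ k, (Yᵀ i k * Y l j * Real.exp (-θ * (t - t₀))) * g s k l :=
          intervalIntegral.integral_congr fun s _ => hpt s
      _ = ∑ l, ∑ k, (Yᵀ i k * Y l j * Real.exp (-θ * (t - t₀))) * ∫ s in t₀..t, g s k l := by
          rw [intervalIntegral.integral_finset_sum]
          · refine Finset.sum_congr rfl fun l _ => ?_
            rw [intervalIntegral.integral_finset_sum]
            · exact Finset.sum_congr rfl fun k _ => intervalIntegral.integral_const_mul _ _
            · exact fun k _ => (continuous_const.mul (hgc k l)).intervalIntegrable _ _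
          · exact fun l _ => ((continuous_finset_sum _ fun k _ =>
              continuous_const.mul (hgc k l)).intervalIntegrable _ _)
      _ = Real.exp (-θ * (t - t₀)) * ((Yᵀ * M * Y) i j) := by
          simp only [Matrix.mul_apply, hM, Matrix.of_apply, Finset.mul_sum, Finset.sum_mul]
          exact Finset.sum_congr rfl fun l _ => Finset.sum_congr rfl fun k _ => by ring
  rw [hA]
  have hfirst : (X t₀ * Y)ᵀ * S₀ * (X t₀ * Y) = Yᵀ * ((X t₀)ᵀ * S t₀ * X t₀) * Y := by
    rw [hS₀]; simp only [Matrix.transpose_mul, Matrix.mul_assoc]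
  rw [hfirst, ← smul_add, ← Matrix.add_mul, ← Matrix.mul_add, hFt]
  have hfin : Yᵀ * ((X t)ᵀ * S t * X t) * Y = S t := by
    have : Yᵀ * ((X t)ᵀ * S t * X t) * Y = (X t * Y)ᵀ * S t * (X t * Y) := by
      simp only [Matrix.transpose_mul, Matrix.mul_assoc]
    rw [this, hXY]; simp
  rw [Matrix.mul_smul, Matrix.smul_mul, smul_smul, ← Real.exp_add]
  rw [hfin]
  norm_num
end

section
/- Let n ≥ 1, C ∈ ℝ^{1×n}, θ ∈ ℝ, let 𝒜 : ℝ → ℝ^{n×n} be continuous, and let S : [t₀,∞) → ℝ^{n×n} be differentiable with S'(t) = −𝒜(t)ᵀS(t) − S(t)𝒜(t) − θS(t) + CᵀC for all t ≥ t₀. If S(t₀) is symmetric positive definite, then S(t) is symmetric positive definite for every t ≥ t₀. -/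
open Matrix Set
open scoped NNReal

attribute [local instance] Matrix.normedAddCommGroup Matrix.normedSpace

section lyapAux

variable {E : Type*} [NormedAddCommGroup E] [NormedSpace ℝ E] [CompleteSpace E]

/-- One Picard–Lindelöf step of uniform length for a globally Lipschitz field. -/
lemma lyap_step (v : ℝ → E → E) {K : ℝ≥0} (hK : 1 ≤ (K : ℝ))
    (hlip : ∀ t, LipschitzWith K (v t)) (hcont : ∀ x, Continuous fun t => v t x)
    (hv0 : ∀ t, v t 0 = 0) (a c : ℝ) (hac : a ≤ c) (hce : c - a ≤ (2 * (K : ℝ))⁻¹) (x₀ : E) :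
    ∃ f : ℝ → E, f a = x₀ ∧ ∀ t ∈ Icc a c, HasDerivWithinAt f (v t (f t)) (Icc a c) t := by
  have hK0 : (0 : ℝ) < K := lt_of_lt_of_le one_pos hK
  have hpl : IsPicardLindelof v (tmin := a) (tmax := c) ⟨a, le_refl a, hac⟩ x₀ (‖x₀‖₊ + 1) 0
      (K * (2 * ‖x₀‖₊ + 2)) K := by
    refine ⟨fun t _ => LipschitzWith.lipschitzOnWith (hlip t),
      fun x _ => (hcont x).continuousOn, fun t _ x hx => ?_, ?_⟩
    · push_cast
      have h1 : ‖v t x‖ ≤ (K : ℝ) * ‖x‖ := by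
        have h := (hlip t).dist_le_mul x 0
        rwa [hv0 t, dist_zero_right, dist_zero_right] at h
      have h2 : ‖x‖ ≤ ‖x₀‖ + (‖x₀‖ + 1) := by
        have := mem_closedBall_iff_norm.mp hx
        simp only [NNReal.coe_add, coe_nnnorm, NNReal.coe_one] at this
        have h3 : ‖x‖ - ‖x₀‖ ≤ ‖x - x₀‖ := norm_sub_norm_le x x₀
        linarith
      nlinarith [norm_nonneg x, norm_nonneg x₀]
    · have hmax : max (c - a) (a - a) = c - a := by
        rw [sub_self]; exact max_eq_left (by linarith)
      change (↑(K * (2 * ‖x₀‖₊ + 2)) : ℝ) * max (c - a) (a - a) ≤ ↑(‖x₀‖₊ + 1) - ((0 : ℝ≥0) : ℝ)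
      rw [hmax, NNReal.coe_zero, sub_zero]
      push_cast
      have h1 : (K : ℝ) * (2 * ‖x₀‖ + 2) * (c - a) ≤ (K : ℝ) * (2 * ‖x₀‖ + 2) * (2 * (K : ℝ))⁻¹ := by
        apply mul_le_mul_of_nonneg_left hce
        nlinarith [norm_nonneg x₀]
      have h2 : (K : ℝ) * (2 * ‖x₀‖ + 2) * (2 * (K : ℝ))⁻¹ = ‖x₀‖ + 1 := by
        field_simp
      rw [h2] at h1
      linarith
  exact hpl.exists_eq_forall_mem_Icc_hasDerivWithinAt₀

/-- Global existence on any compact interval for a globally Lipschitz field vanishing at 0. -/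
lemma lyap_global (v : ℝ → E → E) {K : ℝ≥0} (hK : 1 ≤ (K : ℝ))
    (hlip : ∀ t, LipschitzWith K (v t)) (hcont : ∀ x, Continuous fun t => v t x)
    (hv0 : ∀ t, v t 0 = 0) (a b : ℝ) (hab : a ≤ b) (x₀ : E) :
    ∃ f : ℝ → E, f a = x₀ ∧ ∀ t ∈ Icc a b, HasDerivWithinAt f (v t (f t)) (Icc a b) t := by
  have hK0 : (0 : ℝ) < K := lt_of_lt_of_le one_pos hK
  have hε : (0 : ℝ) < (2 * (K : ℝ))⁻¹ := by positivity
  obtain ⟨m, hm⟩ := Archimedean.arch (b - a) hε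
  rw [nsmul_eq_mul] at hm
  induction m generalizing a x₀ with
  | zero =>
    refine lyap_step v hK hlip hcont hv0 a b hab ?_ x₀
    simp only [Nat.cast_zero, zero_mul] at hm
    linarith
  | succ m ih =>
    by_cases hsmall : b - a ≤ (2 * (K : ℝ))⁻¹
    · exact lyap_step v hK hlip hcont hv0 a b hab hsmall x₀
    · push_neg at hsmall
      set c := a + (2 * (K : ℝ))⁻¹ with hc
      have hac : a ≤ c := le_add_of_nonneg_right hε.le
      have hcb : c ≤ b := by simp only [hc]; linarith
      obtain ⟨f₁, hf₁a, hf₁⟩ := lyap_step v hK hlip hcont hv0 a c hac (by simp [hc]) x₀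
      obtain ⟨f₂, hf₂c, hf₂⟩ := ih c hcb (f₁ c) (by push_cast; push_cast at hm; linarith)
      refine ⟨fun t => if t ≤ c then f₁ t else f₂ t, by simp [hac, hf₁a], ?_⟩
      have heq1 : EqOn (fun t => if t ≤ c then f₁ t else f₂ t) f₁ (Icc a c) := by
        intro s hs; simp [hs.2]
      have heq2 : EqOn (fun t => if t ≤ c then f₁ t else f₂ t) f₂ (Icc c b) := by
        intro s hs
        by_cases h : s ≤ c
        · have : s = c := le_antisymm h hs.1
          simp [this, hf₂c]
        · simp [h]
      have hg₁ : ∀ t ∈ Icc a c, HasDerivWithinAt (fun t => if t ≤ c then f₁ t else f₂ t)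
          (v t ((fun t => if t ≤ c then f₁ t else f₂ t) t)) (Icc a c) t := by
        intro t ht
        have := (hf₁ t ht).congr heq1 (heq1 ht)
        rwa [heq1 ht] 
      have hg₂ : ∀ t ∈ Icc c b, HasDerivWithinAt (fun t => if t ≤ c then f₁ t else f₂ t)
          (v t ((fun t => if t ≤ c then f₁ t else f₂ t) t)) (Icc c b) t := by
        intro t ht
        have := (hf₂ t ht).congr heq2 (heq2 ht)
        rwa [heq2 ht]
      intro t ht
      rcases lt_trichotomy t c with h | h | h
      · refine (hg₁ t ⟨ht.1, h.le⟩).mono_of_mem_nhdsWithin ?_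
        rw [mem_nhdsWithin]
        exact ⟨Iio c, isOpen_Iio, h, fun z hz => ⟨hz.2.1, hz.1.le⟩⟩
      · have h1 := hg₁ t ⟨ht.1, h.le⟩
        have h2 := hg₂ t ⟨h.ge, ht.2⟩
        exact (h1.union h2).mono (Icc_union_Icc_eq_Icc hac hcb).symm.subset
      · refine (hg₂ t ⟨h.le, ht.2⟩).mono_of_mem_nhdsWithin ?_
        rw [mem_nhdsWithin]
        exact ⟨Ioi c, isOpen_Ioi, h, fun z hz => ⟨hz.1.le, hz.2.2⟩⟩

/-- Backward-in-time global existence: prescribe the value at the right endpoint. -/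
lemma lyap_global_backward (v : ℝ → E → E) {K : ℝ≥0} (hK : 1 ≤ (K : ℝ))
    (hlip : ∀ t, LipschitzWith K (v t)) (hcont : ∀ x, Continuous fun t => v t x)
    (hv0 : ∀ t, v t 0 = 0) (a b : ℝ) (hab : a ≤ b) (x₁ : E) :
    ∃ f : ℝ → E, f b = x₁ ∧ ∀ t ∈ Icc a b, HasDerivWithinAt f (v t (f t)) (Icc a b) t := by
  set u : ℝ → E → E := fun t z => -(v (a + b - t) z) with hu
  have hulip : ∀ t, LipschitzWith K (u t) := by
    intro t
    intro z w
    simpa [hu, edist_neg_neg] using hlip (a + b - t) z w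
  have hucont : ∀ x, Continuous fun t => u t x :=
    fun x => ((hcont x).comp (by continuity)).neg
  have hu0 : ∀ t, u t 0 = 0 := by simp [hu, hv0]
  obtain ⟨g, hga, hg⟩ := lyap_global u hK hulip hucont hu0 a b hab x₁
  refine ⟨fun t => g (a + b - t), by simpa using hga, ?_⟩
  intro t ht
  have hσt : a + b - t ∈ Icc a b := ⟨by linarith [ht.2], by linarith [ht.1]⟩
  have hσ : HasDerivWithinAt (fun t : ℝ => a + b - t) (-1 : ℝ) (Icc a b) t :=
    ((hasDerivAt_id t).const_sub (a + b)).hasDerivWithinAt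
  have hmaps : MapsTo (fun t : ℝ => a + b - t) (Icc a b) (Icc a b) :=
    fun z hz => ⟨show a ≤ a + b - z by linarith [hz.2], show a + b - z ≤ b by linarith [hz.1]⟩
  have hcomp := (hg (a + b - t) hσt).scomp t hσ hmaps
  simpa [hu, Function.comp_def] using hcomp

/-- entrywise sup-norm bound for `mulVec`. -/
lemma lyap_mulVec_norm_le {n : ℕ} (A : Matrix (Fin n) (Fin n) ℝ) (y : Fin n → ℝ) :
    ‖A.mulVec y‖ ≤ n * ‖A‖ * ‖y‖ := by
  have hA : (0:ℝ) ≤ ‖A‖ := norm_nonneg _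
  have hy : (0:ℝ) ≤ ‖y‖ := norm_nonneg _
  rw [pi_norm_le_iff_of_nonneg (by positivity)]
  intro i
  rw [Matrix.mulVec, Real.norm_eq_abs]
  refine (Finset.abs_sum_le_sum_abs _ _).trans ?_
  have : ∀ j ∈ Finset.univ, |A i j * y j| ≤ ‖A‖ * ‖y‖ := by
    intro j _
    rw [abs_mul]
    exact mul_le_mul (A.norm_entry_le_entrywise_sup_norm) (norm_le_pi_norm y j) (abs_nonneg _) hA
  calc ∑ j, |A i j * y j| ≤ ∑ _j : Fin n, ‖A‖ * ‖y‖ := Finset.sum_le_sum this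
    _ = n * ‖A‖ * ‖y‖ := by simp [mul_assoc]

/-- entrywise sup-norm bound for matrix product. -/
lemma lyap_mul_norm_le {n : ℕ} (A M : Matrix (Fin n) (Fin n) ℝ) :
    ‖A * M‖ ≤ n * ‖A‖ * ‖M‖ := by
  have hA : (0:ℝ) ≤ ‖A‖ := norm_nonneg _
  have hM : (0:ℝ) ≤ ‖M‖ := norm_nonneg _
  rw [Matrix.norm_le_iff (by positivity)]
  intro i j
  rw [Matrix.mul_apply, Real.norm_eq_abs]
  refine (Finset.abs_sum_le_sum_abs _ _).trans ?_
  have : ∀ k ∈ Finset.univ, |A i k * M k j| ≤ ‖A‖ * ‖M‖ := by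
    intro k _
    rw [abs_mul]
    exact mul_le_mul (A.norm_entry_le_entrywise_sup_norm)
      (M.norm_entry_le_entrywise_sup_norm) (abs_nonneg _) hA
  calc ∑ k, |A i k * M k j| ≤ ∑ _k : Fin n, ‖A‖ * ‖M‖ := Finset.sum_le_sum this
    _ = n * ‖A‖ * ‖M‖ := by simp [mul_assoc]

lemma lyap_transpose_norm {n : ℕ} (A : Matrix (Fin n) (Fin n) ℝ) : ‖Aᵀ‖ ≤ ‖A‖ := by
  rw [Matrix.norm_le_iff (norm_nonneg A)]
  intro i j
  exact A.norm_entry_le_entrywise_sup_norm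

/-- upgrade a derivative within `Icc a b` at `t ∈ Ico a b` to one within `Ici t`. -/
lemma lyap_hasDeriv_Ici {f : ℝ → E} {d : E} {a b t : ℝ} (ht : t ∈ Ico a b)
    (h : HasDerivWithinAt f d (Icc a b) t) : HasDerivWithinAt f d (Ici t) t := by
  refine h.mono_of_mem_nhdsWithin ?_
  rw [mem_nhdsWithin]
  exact ⟨Iio b, isOpen_Iio, ht.2, fun z hz => ⟨le_trans ht.1 hz.2, hz.1.le⟩⟩

lemma lyap_hasDeriv_matrix {n : ℕ} {f : ℝ → Matrix (Fin n) (Fin n) ℝ}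
    {D : Matrix (Fin n) (Fin n) ℝ} {s : Set ℝ} {t : ℝ}
    (h : ∀ i j, HasDerivWithinAt (fun τ => f τ i j) (D i j) s t) :
    HasDerivWithinAt f D s t :=
  hasDerivWithinAt_pi.2 fun i => hasDerivWithinAt_pi.2 fun j => h i j

lemma lyap_dot_sum {n : ℕ} (a b : Fin n → ℝ) (M : Matrix (Fin n) (Fin n) ℝ) :
    ∑ i, ∑ j, a i * (M i j * b j) = a ⬝ᵥ M *ᵥ b := by
  simp [dotProduct, Matrix.mulVec, Finset.mul_sum]


end lyapAux

/-- Along the Lyapunov differential equation `S' = −𝒜ᵀS − S𝒜 − θS + CᵀC`,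
if `S(t₀)` is symmetric positive definite then `S(t)` is symmetric positive definite
for every `t ≥ t₀`. -/
theorem lyapunov_posDef_invariant
    {n : ℕ} (hn : 1 ≤ n) (C : Matrix (Fin 1) (Fin n) ℝ) (θ t₀ : ℝ)
    (𝒜 : ℝ → Matrix (Fin n) (Fin n) ℝ) (h𝒜 : Continuous 𝒜)
    (S : ℝ → Matrix (Fin n) (Fin n) ℝ)
    (hS : ∀ t ∈ Set.Ici t₀, ∀ i j, HasDerivWithinAt (fun τ => S τ i j)
      ((-(𝒜 t)ᵀ * S t - S t * 𝒜 t - θ • S t + Cᵀ * C) i j) (Set.Ici t₀) t)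
    (h0 : (S t₀).PosDef) :
    ∀ t ∈ Set.Ici t₀, (S t).PosDef := by
  intro t₁ ht₁
  rw [mem_Ici] at ht₁
  -- the clamped coefficient matrix
  set ρ : ℝ → ℝ := fun t => max t₀ (min t t₁) with hρdef
  have hρmem : ∀ t, ρ t ∈ Icc t₀ t₁ := fun t =>
    ⟨le_max_left _ _, max_le ht₁ (min_le_right _ _)⟩
  have hρid : ∀ t ∈ Icc t₀ t₁, ρ t = t := fun t ht => by
    simp only [hρdef]
    rw [min_eq_left ht.2, max_eq_right ht.1]
  have hρcont : Continuous ρ := continuous_const.max (continuous_id.min continuous_const)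
  set B : ℝ → Matrix (Fin n) (Fin n) ℝ := fun t => 𝒜 (ρ t) with hBdef
  have hBcont : Continuous B := h𝒜.comp hρcont
  obtain ⟨Ka, hKa⟩ : ∃ Ka, ∀ t, ‖B t‖ ≤ Ka := by
    obtain ⟨Ka, hKa⟩ :=
      (isCompact_Icc (a := t₀) (b := t₁)).exists_bound_of_continuousOn h𝒜.continuousOn
    exact ⟨Ka, fun t => hKa _ (hρmem t)⟩
  have hKa0 : 0 ≤ Ka := le_trans (norm_nonneg _) (hKa t₀)
  -- shorthand for the right-hand side of the ODE
  set W : ℝ → Matrix (Fin n) (Fin n) ℝ :=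
    fun t => -(𝒜 t)ᵀ * S t - S t * 𝒜 t - θ • S t + Cᵀ * C with hWdef
  ---------------------------------------------------------------------------
  -- Part A : symmetry of `S t` on `[t₀, t₁]`
  ---------------------------------------------------------------------------
  have herm : ∀ t ∈ Icc t₀ t₁, (S t)ᵀ = S t := by
    set K₂r : ℝ := 2 * n * Ka + |θ| + 1 with hK₂rdef
    have hK₂r0 : 0 ≤ K₂r := by positivity
    set vM : ℝ → Matrix (Fin n) (Fin n) ℝ → Matrix (Fin n) (Fin n) ℝ :=
      fun t M => -((B t)ᵀ * M) - M * B t - θ • M with hvMdef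
    have hvMlin : ∀ t M M', vM t M - vM t M' = vM t (M - M') := by
      intro t M M'
      simp only [hvMdef, mul_sub, sub_mul, smul_sub]
      abel
    have hvMnorm : ∀ t M, ‖vM t M‖ ≤ K₂r * ‖M‖ := by
      intro t M
      have hb : ‖(B t)ᵀ‖ ≤ Ka := (lyap_transpose_norm _).trans (hKa t)
      have h1 : ‖(B t)ᵀ * M‖ ≤ n * Ka * ‖M‖ := by
        refine (lyap_mul_norm_le _ _).trans ?_
        exact mul_le_mul_of_nonneg_right
          (mul_le_mul_of_nonneg_left hb (by positivity)) (norm_nonneg M)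
      have h2 : ‖M * B t‖ ≤ n * Ka * ‖M‖ := by
        have he : ‖M * B t‖ ≤ ‖(B t)ᵀ * Mᵀ‖ := by
          have h3 : M * B t = ((B t)ᵀ * Mᵀ)ᵀ := by
            rw [Matrix.transpose_mul, Matrix.transpose_transpose, Matrix.transpose_transpose]
          rw [h3]
          exact lyap_transpose_norm _
        refine he.trans ((lyap_mul_norm_le _ _).trans ?_)
        have hMt : ‖Mᵀ‖ ≤ ‖M‖ := lyap_transpose_norm M
        have h4 : (n:ℝ) * ‖(B t)ᵀ‖ * ‖Mᵀ‖ ≤ n * Ka * ‖M‖ :=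
          mul_le_mul (mul_le_mul_of_nonneg_left hb (by positivity)) hMt (norm_nonneg _)
            (by positivity)
        exact h4
      have h3 : ‖θ • M‖ ≤ |θ| * ‖M‖ := by
        rw [norm_smul, Real.norm_eq_abs]
      calc ‖vM t M‖ ≤ ‖(B t)ᵀ * M‖ + ‖M * B t‖ + ‖θ • M‖ := by
            simp only [hvMdef]
            refine (norm_sub_le _ _).trans ?_
            gcongr
            refine (norm_sub_le _ _).trans ?_
            gcongr
            exact (norm_neg _).le
        _ ≤ n * Ka * ‖M‖ + n * Ka * ‖M‖ + |θ| * ‖M‖ := by gcongr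
        _ ≤ K₂r * ‖M‖ := by
            rw [hK₂rdef]
            nlinarith [norm_nonneg M]
    have hvMlip : ∀ t, LipschitzWith (Real.toNNReal K₂r) (vM t) := by
      intro t
      refine LipschitzWith.of_dist_le_mul fun M M' => ?_
      rw [dist_eq_norm, dist_eq_norm, hvMlin, Real.coe_toNNReal _ hK₂r0]
      exact hvMnorm t (M - M')
    set F : ℝ → Matrix (Fin n) (Fin n) ℝ := fun t => S t - (S t)ᵀ with hFdef
    have hWsym : ∀ t ∈ Icc t₀ t₁, W t - (W t)ᵀ = vM t (F t) := by
      intro t ht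
      simp only [hWdef, hvMdef, hFdef, hBdef, hρid t ht, Matrix.transpose_add, Matrix.transpose_sub,
        Matrix.transpose_mul, Matrix.transpose_neg, Matrix.transpose_smul,
        Matrix.transpose_transpose, mul_sub, sub_mul, smul_sub, neg_mul]
      abel
    have hFderiv : ∀ t ∈ Ico t₀ t₁, HasDerivWithinAt F (vM t (F t)) (Ici t) t := by
      intro t ht
      rw [← hWsym t (Ico_subset_Icc_self ht)]
      refine HasDerivWithinAt.mono ?_ (Ici_subset_Ici.2 ht.1)
      apply lyap_hasDeriv_matrix
      intro i j
      exact ((hS t ht.1 i j).sub (hS t ht.1 j i))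
    have hScont : ∀ i j, ContinuousOn (fun τ => S τ i j) (Icc t₀ t₁) := fun i j t ht =>
      ((hS t ht.1 i j).continuousWithinAt).mono Icc_subset_Ici_self
    have hFcont : ContinuousOn F (Icc t₀ t₁) := by
      apply continuousOn_pi.2
      intro i
      apply continuousOn_pi.2
      intro j
      exact (hScont i j).sub (hScont j i)
    have hsym0 : (S t₀)ᵀ = S t₀ := by
      have h := h0.1
      ext i j
      have := congrFun (congrFun h i) j
      simpa [Matrix.conjTranspose_apply] using this
    have hF0 : F t₀ = 0 := by
      simp only [hFdef, hsym0, sub_self]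
    have hMzero : ∀ t ∈ Ico t₀ t₁, HasDerivWithinAt
        (fun _ : ℝ => (0 : Matrix (Fin n) (Fin n) ℝ))
        (vM t ((fun _ : ℝ => (0 : Matrix (Fin n) (Fin n) ℝ)) t)) (Ici t) t := by
      intro t ht
      have hz : vM t ((fun _ : ℝ => (0 : Matrix (Fin n) (Fin n) ℝ)) t) = 0 := by
        simp [hvMdef]
      rw [hz]
      exact hasDerivWithinAt_const t (Ici t) (0 : Matrix (Fin n) (Fin n) ℝ)
    have huniq := ODE_solution_unique_of_mem_Icc_right
      (v := vM) (s := fun _ => (univ : Set (Matrix (Fin n) (Fin n) ℝ)))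
      (g := fun _ => (0 : Matrix (Fin n) (Fin n) ℝ))
      (fun t _ => (hvMlip t).lipschitzOnWith) hFcont hFderiv (fun _ _ => trivial)
      continuousOn_const hMzero
      (fun _ _ => trivial) (by rw [hF0])
    intro t ht
    have hFt : F t = 0 := huniq ht
    rw [hFdef] at hFt
    simp only at hFt
    rw [sub_eq_zero] at hFt
    exact hFt.symm
  ---------------------------------------------------------------------------
  -- Part B : positivity
  ---------------------------------------------------------------------------
  refine Matrix.PosDef.of_dotProduct_mulVec_pos ?_ ?_
  · -- IsHermitian
    have := herm t₁ ⟨ht₁, le_refl t₁⟩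
    ext i j
    rw [Matrix.conjTranspose_apply, star_trivial]
    exact congrFun (congrFun this i) j
  · intro x hx
    rw [star_trivial]
    -- the vector field
    set v : ℝ → (Fin n → ℝ) → (Fin n → ℝ) := fun t y => (B t).mulVec y with hvdef
    set K : ℝ≥0 := Real.toNNReal (n * Ka + 1) with hKdef
    have hKcoe : (K : ℝ) = n * Ka + 1 := Real.coe_toNNReal _ (by positivity)
    have hK1 : 1 ≤ (K : ℝ) := by
      rw [hKcoe]
      nlinarith [mul_nonneg (Nat.cast_nonneg n : (0:ℝ) ≤ n) hKa0]
    have hvnorm : ∀ t y, ‖v t y‖ ≤ (K : ℝ) * ‖y‖ := by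
      intro t y
      rw [hKcoe]
      refine (lyap_mulVec_norm_le _ _).trans ?_
      have h1 : (n:ℝ) * ‖B t‖ * ‖y‖ ≤ n * Ka * ‖y‖ :=
        mul_le_mul_of_nonneg_right
          (mul_le_mul_of_nonneg_left (hKa t) (by positivity)) (norm_nonneg y)
      nlinarith [norm_nonneg y]
    have hvlip : ∀ t, LipschitzWith K (v t) := by
      intro t
      refine LipschitzWith.of_dist_le_mul fun y y' => ?_
      rw [dist_eq_norm, dist_eq_norm]
      have : v t y - v t y' = v t (y - y') := by
        simp only [hvdef]
        rw [Matrix.mulVec_sub]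
      rw [this]
      exact hvnorm t (y - y')
    have hvcont : ∀ y, Continuous fun t => v t y :=
      fun y => hBcont.matrix_mulVec continuous_const
    have hv0 : ∀ t, v t 0 = 0 := fun t => Matrix.mulVec_zero _
    obtain ⟨y, hyb, hy⟩ := lyap_global_backward v hK1 hvlip hvcont hv0 t₀ t₁ ht₁ x
    have hycont : ContinuousOn y (Icc t₀ t₁) := fun t ht => (hy t ht).continuousWithinAt
    -- y never vanishes at t₀
    have hy0 : y t₀ ≠ 0 := by
      intro hzero
      have hvzero : ∀ t ∈ Ico t₀ t₁, HasDerivWithinAt (fun _ : ℝ => (0 : Fin n → ℝ))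
          (v t ((fun _ : ℝ => (0 : Fin n → ℝ)) t)) (Ici t) t := by
        intro t ht
        have hz : v t ((fun _ : ℝ => (0 : Fin n → ℝ)) t) = 0 := hv0 t
        rw [hz]
        exact hasDerivWithinAt_const t (Ici t) (0 : Fin n → ℝ)
      have huniq := ODE_solution_unique_of_mem_Icc_right
        (v := v) (s := fun _ => (univ : Set (Fin n → ℝ)))
        (g := fun _ => (0 : Fin n → ℝ))
        (fun t _ => (hvlip t).lipschitzOnWith) hycont
        (fun t ht => lyap_hasDeriv_Ici ht (hy t (Ico_subset_Icc_self ht)))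
        (fun _ _ => trivial) continuousOn_const hvzero
        (fun _ _ => trivial) (by rw [hzero])
      have : y t₁ = 0 := huniq (right_mem_Icc.2 ht₁)
      exact hx (hyb ▸ this)
    -- component derivatives
    have hyd : ∀ t ∈ Icc t₀ t₁, ∀ i,
        HasDerivWithinAt (fun τ => y τ i) ((𝒜 t *ᵥ y t) i) (Icc t₀ t₁) t := by
      intro t ht i
      have h := hy t ht
      have : v t (y t) = 𝒜 t *ᵥ y t := by
        simp only [hvdef, hBdef, hρid t ht]
      rw [this] at h
      exact hasDerivWithinAt_pi.1 h i
    have hSd : ∀ t ∈ Icc t₀ t₁, ∀ i j,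
        HasDerivWithinAt (fun τ => S τ i j) (W t i j) (Icc t₀ t₁) t := by
      intro t ht i j
      exact (hS t ht.1 i j).mono Icc_subset_Ici_self
    -- the quadratic form along y
    set q : ℝ → ℝ := fun t => ∑ i, ∑ j, y t i * (S t i j * y t j) with hqdef
    have hqS : ∀ t, q t = y t ⬝ᵥ S t *ᵥ y t := fun t => lyap_dot_sum _ _ _
    have hqd : ∀ t ∈ Icc t₀ t₁,
        HasDerivWithinAt q (-θ * q t + (C *ᵥ y t) ⬝ᵥ (C *ᵥ y t)) (Icc t₀ t₁) t := by
      intro t ht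
      have hD : HasDerivWithinAt q
          (∑ i, ∑ j, ((𝒜 t *ᵥ y t) i * (S t i j * y t j) +
            y t i * (W t i j * y t j + S t i j * ((𝒜 t *ᵥ y t) j)))) (Icc t₀ t₁) t := by
        apply HasDerivWithinAt.fun_sum
        intro i _
        apply HasDerivWithinAt.fun_sum
        intro j _
        exact (hyd t ht i).mul ((hSd t ht i j).mul (hyd t ht j))
      convert hD using 1
      -- algebraic identity
      have hsplit : ∑ i, ∑ j, ((𝒜 t *ᵥ y t) i * (S t i j * y t j) +
            y t i * (W t i j * y t j + S t i j * ((𝒜 t *ᵥ y t) j)))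
          = (𝒜 t *ᵥ y t) ⬝ᵥ S t *ᵥ y t + (y t ⬝ᵥ W t *ᵥ y t
            + y t ⬝ᵥ S t *ᵥ (𝒜 t *ᵥ y t)) := by
        rw [← lyap_dot_sum (𝒜 t *ᵥ y t) (y t) (S t), ← lyap_dot_sum (y t) (y t) (W t),
          ← lyap_dot_sum (y t) (𝒜 t *ᵥ y t) (S t)]
        simp only [mul_add, Finset.sum_add_distrib]
      rw [hsplit]
      have hWexp : y t ⬝ᵥ W t *ᵥ y t =
          -((𝒜 t *ᵥ y t) ⬝ᵥ S t *ᵥ y t) - y t ⬝ᵥ S t *ᵥ (𝒜 t *ᵥ y t)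
            - θ * (y t ⬝ᵥ S t *ᵥ y t) + (C *ᵥ y t) ⬝ᵥ (C *ᵥ y t) := by
        simp only [hWdef, Matrix.add_mulVec, Matrix.sub_mulVec, Matrix.neg_mulVec,
          dotProduct_add, dotProduct_sub, dotProduct_neg,
          ← Matrix.mulVec_mulVec, Matrix.smul_mulVec, dotProduct_smul]
        have h1 : y t ⬝ᵥ (𝒜 t)ᵀ *ᵥ (S t *ᵥ y t) = (𝒜 t *ᵥ y t) ⬝ᵥ S t *ᵥ y t := by
          rw [Matrix.dotProduct_mulVec, Matrix.vecMul_transpose]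
        have h2 : y t ⬝ᵥ Cᵀ *ᵥ (C *ᵥ y t) = (C *ᵥ y t) ⬝ᵥ (C *ᵥ y t) := by
          rw [Matrix.dotProduct_mulVec, Matrix.vecMul_transpose]
        rw [h1, h2]
        ring_nf
      rw [hWexp, hqS]
      ring
    -- the auxiliary monotone function
    set h : ℝ → ℝ := fun t => Real.exp (θ * t) * q t with hhdef
    have hhd : ∀ t ∈ Icc t₀ t₁,
        HasDerivWithinAt h (Real.exp (θ * t) * ((C *ᵥ y t) ⬝ᵥ (C *ᵥ y t))) (Icc t₀ t₁) t := by
      intro t ht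
      have he : HasDerivWithinAt (fun τ => Real.exp (θ * τ)) (Real.exp (θ * t) * θ)
          (Icc t₀ t₁) t := by
        simpa using (((hasDerivAt_id t).const_mul θ).exp).hasDerivWithinAt
      have := he.fun_mul (hqd t ht)
      exact this.congr_deriv (by ring)
    have hhcont : ContinuousOn h (Icc t₀ t₁) := fun t ht => (hhd t ht).continuousWithinAt
    have hmono : MonotoneOn h (Icc t₀ t₁) := by
      apply monotoneOn_of_deriv_nonneg (convex_Icc _ _) hhcont
      · intro t ht
        rw [interior_Icc] at ht
        exact ((hhd t (Ioo_subset_Icc_self ht)).hasDerivAt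
          (Icc_mem_nhds ht.1 ht.2)).differentiableAt.differentiableWithinAt
      · intro t ht
        rw [interior_Icc] at ht
        rw [((hhd t (Ioo_subset_Icc_self ht)).hasDerivAt (Icc_mem_nhds ht.1 ht.2)).deriv]
        have : (0:ℝ) ≤ (C *ᵥ y t) ⬝ᵥ (C *ᵥ y t) :=
          Finset.sum_nonneg fun i _ => mul_self_nonneg _
        positivity
    have hq0 : 0 < q t₀ := by
      have := h0.dotProduct_mulVec_pos hy0
      rw [star_trivial] at this
      rw [hqS]
      exact this
    have hle : h t₀ ≤ h t₁ := hmono (left_mem_Icc.2 ht₁) (right_mem_Icc.2 ht₁) ht₁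
    have hgoal : x ⬝ᵥ S t₁ *ᵥ x = q t₁ := by rw [hqS, hyb]
    rw [hgoal]
    simp only [hhdef] at hle
    nlinarith [Real.exp_pos (θ * t₀), Real.exp_pos (θ * t₁), hq0, hle]
end

section
/- Let n ≥ 1, C ∈ ℝ^{1×n}, θ ∈ ℝ, let 𝒜 : ℝ → ℝ^{n×n} be continuous with ‖𝒜(s)‖ ≤ a for all s ∈ [t₀,t] (operator norm), and let S : [t₀,∞) → ℝ^{n×n} be differentiable with S'(τ) = −𝒜(τ)ᵀS(τ) − S(τ)𝒜(τ) − θS(τ) + CᵀC for all τ ≥ t₀. If S(t₀) is symmetric and S(t₀) ⪰ s_min·Id with s_min ≥ 0, then S(t) ⪰ e^{−(θ+2a)(t−t₀)} s_min·Id. -/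
open Matrix Set


lemma quad_bound {n : ℕ} (A : Matrix (Fin n) (Fin n) ℝ) {a : ℝ}
    (h : ‖Matrix.toEuclideanCLM (𝕜 := ℝ) A‖ ≤ a) (x : Fin n → ℝ)
    (hx : ∑ i, x i ^ 2 = 1) : |(A *ᵥ x) ⬝ᵥ x| ≤ a := by
  set y : EuclideanSpace ℝ (Fin n) := (WithLp.equiv 2 (Fin n → ℝ)).symm x with hy
  have hny : ‖y‖ = 1 := by
    rw [EuclideanSpace.norm_eq]
    have : ∀ i : Fin n, ‖y i‖ ^ 2 = x i ^ 2 := fun i => by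
      simp [hy, WithLp.equiv_symm_apply, PiLp.toLp_apply, sq_abs]
    rw [Finset.sum_congr rfl fun i _ => this i, hx, Real.sqrt_one]
  have h1 : (A *ᵥ x) ⬝ᵥ x = inner ℝ (Matrix.toEuclideanCLM (𝕜 := ℝ) A y) y := by
    rw [show Matrix.toEuclideanCLM (𝕜 := ℝ) A y = WithLp.toLp 2 (A *ᵥ x) from rfl]
    simp [PiLp.inner_apply, dotProduct, hy, WithLp.equiv_symm_apply, PiLp.toLp_apply, mul_comm]
  rw [h1]
  calc |inner ℝ (Matrix.toEuclideanCLM (𝕜 := ℝ) A y) y|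
      ≤ ‖Matrix.toEuclideanCLM (𝕜 := ℝ) A y‖ * ‖y‖ := abs_real_inner_le_norm _ _
    _ ≤ ‖Matrix.toEuclideanCLM (𝕜 := ℝ) A‖ * ‖y‖ * ‖y‖ := by
        gcongr; exact (Matrix.toEuclideanCLM (𝕜 := ℝ) A).le_opNorm y
    _ ≤ a := by rw [hny, mul_one, mul_one]; exact h


lemma quad_deriv {n : ℕ} {M : ℝ → Matrix (Fin n) (Fin n) ℝ}
    {M' : Matrix (Fin n) (Fin n) ℝ} {s : Set ℝ} {τ : ℝ}
    (h : ∀ i j, HasDerivWithinAt (fun σ => M σ i j) (M' i j) s τ) (x : Fin n → ℝ) :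
    HasDerivWithinAt (fun σ => x ⬝ᵥ (M σ) *ᵥ x) (x ⬝ᵥ M' *ᵥ x) s τ := by
  have hrw : ∀ N : Matrix (Fin n) (Fin n) ℝ, x ⬝ᵥ N *ᵥ x = ∑ i, ∑ j, x i * (N i j * x j) := by
    intro N; simp [dotProduct, mulVec, Finset.mul_sum]
  simp only [hrw]
  exact HasDerivWithinAt.fun_sum fun i _ => HasDerivWithinAt.fun_sum fun j _ =>
    (((h i j).mul_const (x j)).const_mul (x i))

lemma quad_abs_le {n : ℕ} (D : Matrix (Fin n) (Fin n) ℝ) (x : Fin n → ℝ)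
    (hx : ∀ i, |x i| ≤ 1) : |x ⬝ᵥ D *ᵥ x| ≤ ∑ i, ∑ j, |D i j| := by
  have hrw : x ⬝ᵥ D *ᵥ x = ∑ i, ∑ j, x i * (D i j * x j) := by
    simp [dotProduct, mulVec, Finset.mul_sum]
  rw [hrw]
  calc |∑ i, ∑ j, x i * (D i j * x j)| ≤ ∑ i, |∑ j, x i * (D i j * x j)| :=
        Finset.abs_sum_le_sum_abs _ _
    _ ≤ ∑ i, ∑ j, |x i * (D i j * x j)| :=
        Finset.sum_le_sum fun i _ => Finset.abs_sum_le_sum_abs _ _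
    _ ≤ ∑ i, ∑ j, |D i j| := by
        refine Finset.sum_le_sum fun i _ => Finset.sum_le_sum fun j _ => ?_
        rw [abs_mul, abs_mul]
        calc |x i| * (|D i j| * |x j|) ≤ 1 * (|D i j| * 1) := by
              apply mul_le_mul (hx i) _ (by positivity) zero_le_one
              exact mul_le_mul_of_nonneg_left (hx j) (abs_nonneg _)
          _ = |D i j| := by ring

lemma quad_scale {n : ℕ} {M : Matrix (Fin n) (Fin n) ℝ}
    (h : ∀ x : Fin n → ℝ, ∑ i, x i ^ 2 = 1 → 0 ≤ x ⬝ᵥ M *ᵥ x) (z : Fin n → ℝ) :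
    0 ≤ z ⬝ᵥ M *ᵥ z := by
  rcases eq_or_ne z 0 with rfl | hz
  · simp
  · have hsum : 0 < ∑ i, z i ^ 2 := by
      have : ∃ i, z i ≠ 0 := by
        by_contra hc; push_neg at hc; exact hz (funext hc)
      obtain ⟨i, hi⟩ := this
      exact Finset.sum_pos' (fun j _ => sq_nonneg _) ⟨i, Finset.mem_univ i, by positivity⟩
    set r : ℝ := Real.sqrt (∑ i, z i ^ 2) with hr
    have hrpos : 0 < r := Real.sqrt_pos.mpr hsum
    have hr2 : r ^ 2 = ∑ i, z i ^ 2 := Real.sq_sqrt hsum.le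
    have hu : ∑ i, (r⁻¹ • z) i ^ 2 = 1 := by
      simp only [Pi.smul_apply, smul_eq_mul, mul_pow, ← Finset.mul_sum]
      rw [← hr2]; field_simp
    have := h (r⁻¹ • z) hu
    have hq : (r⁻¹ • z) ⬝ᵥ M *ᵥ (r⁻¹ • z) = r⁻¹ * r⁻¹ * (z ⬝ᵥ M *ᵥ z) := by
      rw [mulVec_smul, dotProduct_smul, smul_dotProduct]
      simp [smul_eq_mul]; ring
    rw [hq] at this
    have hrinv : 0 < r⁻¹ * r⁻¹ := by positivity
    nlinarith [this, hrinv]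


lemma quad_smul_one {n : ℕ} (c : ℝ) (x : Fin n → ℝ) :
    x ⬝ᵥ (c • (1 : Matrix (Fin n) (Fin n) ℝ)) *ᵥ x = c * ∑ i, x i ^ 2 := by
  rw [smul_mulVec, one_mulVec, dotProduct_smul, smul_eq_mul]
  congr 1
  simp [dotProduct, sq]

lemma quad_cross {n : ℕ} (A B : Matrix (Fin n) (Fin n) ℝ) (x : Fin n → ℝ) :
    x ⬝ᵥ (Aᵀ * B) *ᵥ x + x ⬝ᵥ (B * A) *ᵥ x = (A *ᵥ x) ⬝ᵥ ((B + Bᵀ) *ᵥ x) := by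
  have h1 : x ⬝ᵥ (Aᵀ * B) *ᵥ x = (A *ᵥ x) ⬝ᵥ (B *ᵥ x) := by
    rw [← mulVec_mulVec, Matrix.dotProduct_mulVec x Aᵀ (B *ᵥ x), vecMul_transpose]
  have h2 : x ⬝ᵥ (B * A) *ᵥ x = (A *ᵥ x) ⬝ᵥ (Bᵀ *ᵥ x) := by
    rw [← mulVec_mulVec, Matrix.dotProduct_mulVec x B (A *ᵥ x), Matrix.mulVec_transpose]
    exact dotProduct_comm _ _
  rw [h1, h2, add_mulVec, dotProduct_add]

lemma quad_CtC {m n : ℕ} (C : Matrix (Fin m) (Fin n) ℝ) (x : Fin n → ℝ) :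
    0 ≤ x ⬝ᵥ (Cᵀ * C) *ᵥ x := by
  rw [← mulVec_mulVec, dotProduct_mulVec, vecMul_transpose]
  exact Finset.sum_nonneg fun i _ => mul_self_nonneg _

lemma quad_transpose {n : ℕ} (A : Matrix (Fin n) (Fin n) ℝ) (x : Fin n → ℝ) :
    x ⬝ᵥ Aᵀ *ᵥ x = x ⬝ᵥ A *ᵥ x := by
  rw [Matrix.mulVec_transpose, Matrix.dotProduct_mulVec, dotProduct_comm]

lemma key_claim {n : ℕ} (hn : 1 ≤ n) (C : Matrix (Fin 1) (Fin n) ℝ) (θ a : ℝ)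
    (𝒜 : ℝ → Matrix (Fin n) (Fin n) ℝ)
    (t₀ t : ℝ) (ht : t₀ ≤ t)
    (ha : ∀ s ∈ Set.Icc t₀ t, ‖Matrix.toEuclideanCLM (𝕜 := ℝ) (𝒜 s)‖ ≤ a)
    (S : ℝ → Matrix (Fin n) (Fin n) ℝ)
    (hS : ∀ τ ∈ Set.Ici t₀, ∀ i j, HasDerivWithinAt (fun σ => S σ i j)
      ((-(𝒜 τ)ᵀ * S τ - S τ * 𝒜 τ - θ • S τ + Cᵀ * C) i j) (Set.Ici t₀) τ)
    (s_min : ℝ) (hs_min : 0 ≤ s_min)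
    (hlow : (S t₀ - s_min • (1 : Matrix (Fin n) (Fin n) ℝ)).PosSemidef)
    (ε : ℝ) (hε : 0 < ε) :
    ∀ τ ∈ Icc t₀ t, ∀ x : Fin n → ℝ, ∑ i, x i ^ 2 = 1 →
      0 < x ⬝ᵥ (S τ) *ᵥ x - (Real.exp (-(θ + 2 * a) * (τ - t₀)) * s_min
        - ε * Real.exp ((2 * a + |θ| + 1) * (τ - t₀))) := by
  have a0 : 0 ≤ a := (norm_nonneg _).trans (ha t₀ ⟨le_refl t₀, ht⟩)
  set K : ℝ := 2 * a + |θ| + 1 with hK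
  set φ : ℝ → ℝ := fun σ => Real.exp (-(θ + 2 * a) * (σ - t₀)) * s_min with hφ
  set ψ : ℝ → ℝ := fun σ => φ σ - ε * Real.exp (K * (σ - t₀)) with hψdef
  set ψ' : ℝ → ℝ := fun σ => -(θ + 2 * a) * φ σ - ε * (K * Real.exp (K * (σ - t₀))) with hψ'def
  set g : (Fin n → ℝ) → ℝ → ℝ := fun x σ => x ⬝ᵥ (S σ) *ᵥ x - ψ σ with hgdef
  have hφ0 : ∀ σ, 0 ≤ φ σ := fun σ => mul_nonneg (Real.exp_pos _).le hs_min
  have hψderiv : ∀ σ : ℝ, HasDerivAt ψ (ψ' σ) σ := by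
    intro σ
    have h1 : HasDerivAt (fun σ : ℝ => Real.exp (-(θ + 2 * a) * (σ - t₀)))
        (-(θ + 2 * a) * Real.exp (-(θ + 2 * a) * (σ - t₀))) σ := by
      have := (((hasDerivAt_id σ).sub_const t₀).const_mul (-(θ + 2 * a))).exp
      simpa [mul_one, mul_comm] using this
    have h2 : HasDerivAt (fun σ : ℝ => Real.exp (K * (σ - t₀)))
        (K * Real.exp (K * (σ - t₀))) σ := by
      have := (((hasDerivAt_id σ).sub_const t₀).const_mul K).exp
      simpa [mul_one, mul_comm] using this
    have := (h1.mul_const s_min).fun_sub (h2.const_mul ε)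
    refine this.congr_deriv ?_
    simp [hψ'def, hφ]; ring
  have hg : ∀ (x : Fin n → ℝ), ∀ τ ∈ Ici t₀, HasDerivWithinAt (g x)
      (x ⬝ᵥ (-(𝒜 τ)ᵀ * S τ - S τ * 𝒜 τ - θ • S τ + Cᵀ * C) *ᵥ x - ψ' τ) (Ici t₀) τ :=
    fun x τ hτ => (quad_deriv (hS τ hτ) x).sub ((hψderiv τ).hasDerivWithinAt)
  have hgc : ∀ x : Fin n → ℝ, ContinuousOn (g x) (Ici t₀) :=
    fun x τ hτ => (hg x τ hτ).continuousWithinAt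
  -- the positivity predicate
  set Q : ℝ → Prop := fun σ => ∀ x : Fin n → ℝ, ∑ i, x i ^ 2 = 1 → 0 < g x σ with hQ
  have hquad1 : ∀ (c : ℝ) (x : Fin n → ℝ), ∑ i, x i ^ 2 = 1 →
      x ⬝ᵥ (S c - ψ c • (1 : Matrix (Fin n) (Fin n) ℝ)) *ᵥ x = g x c := by
    intro c x hx
    rw [Matrix.sub_mulVec, dotProduct_sub, quad_smul_one, hx, mul_one, hgdef]
  have hbase : Q t₀ := by
    intro x hx
    have h0 := hlow.dotProduct_mulVec_nonneg x
    have hstar : star x = x := by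
      funext i; simp
    rw [hstar] at h0
    have h1 : x ⬝ᵥ (S t₀ - s_min • (1 : Matrix (Fin n) (Fin n) ℝ)) *ᵥ x
        = x ⬝ᵥ (S t₀) *ᵥ x - s_min := by
      rw [Matrix.sub_mulVec, dotProduct_sub, quad_smul_one, hx, mul_one]
    have hψt₀ : ψ t₀ = s_min - ε := by
      simp [hψdef, hφ]
    rw [h1] at h0
    simp only [hgdef, hψt₀]
    linarith
  -- the step: positivity propagates to the right endpoint
  have hstep : ∀ c ∈ Icc t₀ t, (∀ σ ∈ Ico t₀ c, Q σ) → Q c := by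
    intro c hc hIco
    rcases eq_or_lt_of_le hc.1 with heq | hlt
    · rw [← heq]; exact hbase
    -- c > t₀
    have hqnn : ∀ y : Fin n → ℝ, ∑ i, y i ^ 2 = 1 → 0 ≤ g y c := by
      intro y hy
      have hcy : Filter.Tendsto (g y) (nhdsWithin c (Ioo t₀ c)) (nhds (g y c)) :=
        ((hgc y) c (le_of_lt hlt)).mono (fun σ hσ => le_of_lt hσ.1)
      have : Filter.NeBot (nhdsWithin c (Ioo t₀ c)) := right_nhdsWithin_Ioo_neBot hlt
      refine ge_of_tendsto hcy ?_
      exact eventually_nhdsWithin_of_forall fun σ hσ =>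
        (hIco σ ⟨hσ.1.le, hσ.2⟩ y hy).le
    show ∀ x : Fin n → ℝ, ∑ i, x i ^ 2 = 1 → 0 < g x c
    intro x hx
    by_contra hgle
    push_neg at hgle
    have hg0 : g x c = 0 := le_antisymm hgle (hqnn x hx)
    set F : Matrix (Fin n) (Fin n) ℝ := S c - ψ c • 1 with hF
    set M : Matrix (Fin n) (Fin n) ℝ := F + Fᵀ with hM
    have hMquad : ∀ z : Fin n → ℝ, z ⬝ᵥ M *ᵥ z = 2 * (z ⬝ᵥ F *ᵥ z) := by
      intro z
      rw [hM, Matrix.add_mulVec, dotProduct_add, quad_transpose]; ring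
    have hMps : M.PosSemidef := by
      refine Matrix.PosSemidef.of_dotProduct_mulVec_nonneg ?_ ?_
      · -- Hermitian
        ext i j
        simp [hM, Matrix.conjTranspose_apply, Matrix.transpose_apply, Matrix.add_apply]
        ring
      · intro z
        have hstar : star z = z := by funext i; simp
        rw [hstar, hMquad]
        have : 0 ≤ z ⬝ᵥ F *ᵥ z := by
          refine quad_scale (fun y hy => ?_) z
          rw [hquad1 c y hy]
          exact hqnn y hy
        linarith
    have hMx : M *ᵥ x = 0 := by
      refine (hMps.dotProduct_mulVec_zero_iff x).mp ?_
      have hstar : star x = x := by funext i; simp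
      rw [hstar, hMquad, hquad1 c x hx, hg0]; ring
    -- derivative at c within Icc t₀ c
    set v : ℝ := x ⬝ᵥ (-(𝒜 c)ᵀ * S c - S c * 𝒜 c - θ • S c + Cᵀ * C) *ᵥ x - ψ' c with hv
    have hder : HasDerivWithinAt (g x) v (Icc t₀ c) c :=
      (hg x c hlt.le).mono (fun σ hσ => hσ.1)
    have hvle : v ≤ 0 := by
      have hslope := hasDerivWithinAt_iff_tendsto_slope.mp hder
      rw [Set.Icc_sdiff_right] at hslope
      have : Filter.NeBot (nhdsWithin c (Ico t₀ c)) := right_nhdsWithin_Ico_neBot hlt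
      refine le_of_tendsto hslope ?_
      refine eventually_nhdsWithin_of_forall fun σ hσ => ?_
      rw [slope_def_field]
      apply div_nonpos_of_nonneg_of_nonpos
      · rw [hg0, sub_zero]; exact (hIco σ hσ x hx).le
      · linarith [hσ.2]
    have hvpos : 0 < v := by
      -- expand v
      have hexp : x ⬝ᵥ (-(𝒜 c)ᵀ * S c - S c * 𝒜 c - θ • S c + Cᵀ * C) *ᵥ x
          = -(x ⬝ᵥ ((𝒜 c)ᵀ * S c) *ᵥ x + x ⬝ᵥ (S c * 𝒜 c) *ᵥ x)
            - θ * (x ⬝ᵥ S c *ᵥ x) + x ⬝ᵥ (Cᵀ * C) *ᵥ x := by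
        rw [Matrix.add_mulVec, Matrix.sub_mulVec, Matrix.sub_mulVec,
          neg_mul, Matrix.neg_mulVec, dotProduct_add, dotProduct_sub, dotProduct_sub,
          dotProduct_neg, smul_mulVec, dotProduct_smul, smul_eq_mul]
        ring
      have hcross : x ⬝ᵥ ((𝒜 c)ᵀ * S c) *ᵥ x + x ⬝ᵥ (S c * 𝒜 c) *ᵥ x
          = 2 * ψ c * ((𝒜 c *ᵥ x) ⬝ᵥ x) := by
        rw [quad_cross]
        have hSsum : (S c + (S c)ᵀ) *ᵥ x = (2 * ψ c) • x := by
          have hSF : S c = F + ψ c • 1 := by rw [hF, sub_add_cancel]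
          have : S c + (S c)ᵀ = M + (2 * ψ c) • 1 := by
            rw [hSF, hM, Matrix.transpose_add, Matrix.transpose_smul,
              Matrix.transpose_one, two_mul, add_smul]
            abel
          rw [this, Matrix.add_mulVec, hMx, zero_add, smul_mulVec,
            Matrix.one_mulVec]
        rw [hSsum, dotProduct_smul, smul_eq_mul]
      have hSx : x ⬝ᵥ S c *ᵥ x = ψ c := by
        have h := hg0
        simp only [hgdef] at h
        linarith
      have hq := quad_bound (𝒜 c) (ha c ⟨hc.1, hc.2⟩) x hx
      have hCt := quad_CtC C x
      obtain ⟨hq1, hq2⟩ := abs_le.mp hq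
      have he : (0:ℝ) < Real.exp (K * (c - t₀)) := Real.exp_pos _
      have hθ1 : θ ≤ |θ| := le_abs_self θ
      have hθ2 : -|θ| ≤ θ := neg_abs_le θ
      rw [hv, hexp, hcross, hSx]
      simp only [hψ'def]
      set q : ℝ := (𝒜 c *ᵥ x) ⬝ᵥ x
      set e : ℝ := Real.exp (K * (c - t₀)) with hedef
      have hψval : ψ c = φ c - ε * e := rfl
      rw [hψval, hK]
      nlinarith [mul_nonneg (hφ0 c) (sub_nonneg.mpr hq2),
        mul_nonneg (mul_nonneg hε.le he.le) (by linarith : (0:ℝ) ≤ a + q),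
        mul_nonneg (mul_nonneg hε.le he.le) (by linarith : (0:ℝ) ≤ θ + |θ|),
        mul_pos hε he]
    linarith
  -- supremum argument
  set A : Set ℝ := {τ | τ ∈ Icc t₀ t ∧ ∀ σ ∈ Icc t₀ τ, Q σ} with hA
  have ht₀A : t₀ ∈ A := ⟨⟨le_refl t₀, ht⟩, fun σ hσ => by
    have hσ' : σ = t₀ := le_antisymm hσ.2 hσ.1
    rw [hσ']; exact hbase⟩
  have hbdd : BddAbove A := ⟨t, fun τ hτ => hτ.1.2⟩
  have hne : A.Nonempty := ⟨t₀, ht₀A⟩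
  set c := sSup A with hcdef
  have hc1 : t₀ ≤ c := le_csSup hbdd ht₀A
  have hc2 : c ≤ t := csSup_le hne fun τ hτ => hτ.1.2
  have hIcoQ : ∀ σ ∈ Ico t₀ c, Q σ := by
    intro σ hσ
    obtain ⟨τ, hτA, hστ⟩ := exists_lt_of_lt_csSup hne hσ.2
    exact hτA.2 σ ⟨hσ.1, hστ.le⟩
  have hQc : Q c := hstep c ⟨hc1, hc2⟩ hIcoQ
  have hcA : c ∈ A := ⟨⟨hc1, hc2⟩, fun σ hσ => by
    rcases lt_or_eq_of_le hσ.2 with h | h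
    · exact hIcoQ σ ⟨hσ.1, h⟩
    · rw [h]; exact hQc⟩
  have habs1 : ∀ x : Fin n → ℝ, ∑ i, x i ^ 2 = 1 → ∀ i, |x i| ≤ 1 := by
    intro x hx i
    have h2 : x i ^ 2 ≤ 1 := by
      rw [← hx]
      exact Finset.single_le_sum (f := fun i => x i ^ 2) (fun j _ => sq_nonneg _)
        (Finset.mem_univ i)
    nlinarith [abs_nonneg (x i), sq_abs (x i)]
  have hct : c = t := by
    by_contra hnect
    have hclt : c < t := lt_of_le_of_ne hc2 hnect
    set Sph : Set (Fin n → ℝ) := {x | ∑ i, x i ^ 2 = 1} with hSph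
    have hSphClosed : IsClosed Sph :=
      isClosed_eq (continuous_finset_sum _ fun i _ => (continuous_apply i).pow 2)
        continuous_const
    have hSphBdd : Bornology.IsBounded Sph := by
      refine (Metric.isBounded_closedBall (x := (0 : Fin n → ℝ)) (r := 1)).subset ?_
      intro x hx
      rw [Metric.mem_closedBall, dist_zero_right]
      refine pi_norm_le_iff_of_nonneg zero_le_one |>.mpr fun i => ?_
      rw [Real.norm_eq_abs]
      exact habs1 x hx i
    have hSphC : IsCompact Sph := Metric.isCompact_of_isClosed_isBounded hSphClosed hSphBdd
    haveI : NeZero n := ⟨by omega⟩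
    have hx0sum : (∑ i, ((Pi.single 0 1 : Fin n → ℝ)) i ^ 2) = 1 := by
      rw [Finset.sum_eq_single (0 : Fin n)]
      · simp
      · intro j _ hj; rw [Pi.single_apply, if_neg hj]; ring
      · intro hj; exact absurd (Finset.mem_univ _) hj
    have hSphNe : Sph.Nonempty := ⟨(Pi.single 0 1 : Fin n → ℝ), hx0sum⟩
    have hgcont : Continuous fun x : Fin n → ℝ => g x c := by
      have hrw : (fun x : Fin n → ℝ => g x c)
          = fun x => (∑ i, ∑ j, x i * (S c i j * x j)) - ψ c := by
        funext x; simp [hgdef, dotProduct, mulVec, Finset.mul_sum]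
      rw [hrw]
      refine Continuous.sub ?_ continuous_const
      refine continuous_finset_sum _ fun i _ => continuous_finset_sum _ fun j _ => ?_
      exact (continuous_apply i).mul (continuous_const.mul (continuous_apply j))
    obtain ⟨x₀, hx₀S, hmin⟩ := hSphC.exists_isMinOn hSphNe hgcont.continuousOn
    set m := g x₀ c with hmdef
    have hm : 0 < m := hQc x₀ hx₀S
    have hψcont : Continuous ψ := continuous_iff_continuousAt.mpr
      fun σ => (hψderiv σ).continuousAt
    set hfun : ℝ → ℝ := fun σ => (∑ i, ∑ j, |S σ i j - S c i j|) + |ψ σ - ψ c| with hfundef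
    have hhc : ContinuousOn hfun (Ici t₀) := by
      refine ContinuousOn.add ?_ ((hψcont.sub continuous_const).abs.continuousOn)
      refine continuousOn_finset_sum _ fun i _ => continuousOn_finset_sum _ fun j _ => ?_
      have : ContinuousOn (fun σ => S σ i j) (Ici t₀) :=
        fun σ hσ => (hS σ hσ i j).continuousWithinAt
      exact (this.sub continuousOn_const).abs
    have hh0 : hfun c = 0 := by simp [hfundef]
    have hev : ∀ᶠ σ in nhdsWithin c (Ici t₀), hfun σ < m := by
      have := hhc c hc1
      rw [ContinuousWithinAt, hh0] at this
      exact this.eventually (gt_mem_nhds hm)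
    obtain ⟨δ, hδ, hball⟩ := Metric.mem_nhdsWithin_iff.mp hev
    have hgdiff : ∀ σ (x : Fin n → ℝ), ∑ i, x i ^ 2 = 1 → |g x σ - g x c| ≤ hfun σ := by
      intro σ x hx
      have hkey : g x σ - g x c = x ⬝ᵥ (S σ - S c) *ᵥ x - (ψ σ - ψ c) := by
        simp only [hgdef, Matrix.sub_mulVec, dotProduct_sub]; ring
      rw [hkey]
      calc |x ⬝ᵥ (S σ - S c) *ᵥ x - (ψ σ - ψ c)|
          ≤ |x ⬝ᵥ (S σ - S c) *ᵥ x| + |ψ σ - ψ c| := abs_sub _ _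
        _ ≤ (∑ i, ∑ j, |(S σ - S c) i j|) + |ψ σ - ψ c| := by
            gcongr
            exact quad_abs_le _ x (habs1 x hx)
        _ = hfun σ := by simp [hfundef, Matrix.sub_apply]
    set c' := min t (c + δ / 2) with hc'def
    have hcc' : c < c' := lt_min hclt (by linarith)
    have hc'A : c' ∈ A := by
      refine ⟨⟨hc1.trans hcc'.le, min_le_left _ _⟩, ?_⟩
      intro σ hσ
      rcases le_or_gt σ c with h | h
      · rcases lt_or_eq_of_le h with h' | h'
        · exact hIcoQ σ ⟨hσ.1, h'⟩
        · rw [h']; exact hQc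
      · intro x hx
        have hσball : σ ∈ Metric.ball c δ ∩ Ici t₀ := by
          constructor
          · rw [Metric.mem_ball, Real.dist_eq, abs_of_pos (by linarith : (0:ℝ) < σ - c)]
            have : σ ≤ c + δ / 2 := hσ.2.trans (min_le_right _ _)
            linarith
          · exact hc1.trans h.le
        have hhσ : hfun σ < m := hball hσball
        have hdiff := hgdiff σ x hx
        have hminx : m ≤ g x c := hmin hx
        have := abs_le.mp hdiff
        linarith [this.1, this.2]
    exact absurd (le_csSup hbdd hc'A) (not_le.mpr hcc')
  intro τ hτ x hx
  have hfinal := hcA.2 τ (by rw [hct]; exact hτ) x hx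
  simpa [hgdef, hψdef, hφ, hK] using hfinal


lemma entry_bound {n : ℕ} (A : Matrix (Fin n) (Fin n) ℝ) {a : ℝ}
    (h : ‖Matrix.toEuclideanCLM (𝕜 := ℝ) A‖ ≤ a) (i j : Fin n) : |A i j| ≤ a := by
  set u : EuclideanSpace ℝ (Fin n) := (WithLp.equiv 2 (Fin n → ℝ)).symm (Pi.single i 1) with hu
  set w : EuclideanSpace ℝ (Fin n) := (WithLp.equiv 2 (Fin n → ℝ)).symm (Pi.single j 1) with hw
  have hsingle : ∀ k : Fin n, ∑ l, (Pi.single k 1 : Fin n → ℝ) l ^ 2 = 1 := by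
    intro k
    rw [Finset.sum_eq_single k]
    · simp
    · intro l _ hl; rw [Pi.single_apply, if_neg hl]; ring
    · intro hk; exact absurd (Finset.mem_univ _) hk
  have hnorm : ∀ k : Fin n,
      ‖(WithLp.equiv 2 (Fin n → ℝ)).symm (Pi.single k 1)‖ = 1 := by
    intro k
    rw [EuclideanSpace.norm_eq]
    have : ∀ l : Fin n, ‖(WithLp.equiv 2 (Fin n → ℝ)).symm (Pi.single k 1) l‖ ^ 2
        = (Pi.single k 1 : Fin n → ℝ) l ^ 2 := fun l => by
      simp [WithLp.equiv_symm_apply, PiLp.toLp_apply, sq_abs, Pi.single_apply]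
    rw [Finset.sum_congr rfl fun l _ => this l, hsingle k, Real.sqrt_one]
  have hinner : inner ℝ u (Matrix.toEuclideanCLM (𝕜 := ℝ) A w) = A i j := by
    rw [hw, show Matrix.toEuclideanCLM (𝕜 := ℝ) A ((WithLp.equiv 2 (Fin n → ℝ)).symm (Pi.single j 1)) = WithLp.toLp 2 (A *ᵥ Pi.single j 1) from rfl]
    simp only [PiLp.inner_apply, RCLike.inner_apply, conj_trivial, hu,
      WithLp.equiv_symm_apply, PiLp.toLp_apply]
    rw [Finset.sum_eq_single i]
    · simp [Matrix.mulVec_single]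
    · intro l _ hl; rw [Pi.single_apply, if_neg hl]; ring
    · intro hk; exact absurd (Finset.mem_univ _) hk
  calc |A i j| = |inner ℝ u (Matrix.toEuclideanCLM (𝕜 := ℝ) A w)| := by rw [hinner]
    _ ≤ ‖u‖ * ‖Matrix.toEuclideanCLM (𝕜 := ℝ) A w‖ := abs_real_inner_le_norm _ _
    _ ≤ ‖u‖ * (‖Matrix.toEuclideanCLM (𝕜 := ℝ) A‖ * ‖w‖) :=
        mul_le_mul_of_nonneg_left ((Matrix.toEuclideanCLM (𝕜 := ℝ) A).le_opNorm w)
          (norm_nonneg u)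
    _ ≤ a := by rw [hu, hw, hnorm i, hnorm j, one_mul, mul_one]; exact h

lemma sym_pres {n : ℕ} (C : Matrix (Fin 1) (Fin n) ℝ) (θ a : ℝ)
    (𝒜 : ℝ → Matrix (Fin n) (Fin n) ℝ)
    (t₀ t : ℝ) (ht : t₀ ≤ t)
    (ha : ∀ s ∈ Set.Icc t₀ t, ‖Matrix.toEuclideanCLM (𝕜 := ℝ) (𝒜 s)‖ ≤ a)
    (S : ℝ → Matrix (Fin n) (Fin n) ℝ)
    (hS : ∀ τ ∈ Set.Ici t₀, ∀ i j, HasDerivWithinAt (fun σ => S σ i j)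
      ((-(𝒜 τ)ᵀ * S τ - S τ * 𝒜 τ - θ • S τ + Cᵀ * C) i j) (Set.Ici t₀) τ)
    (hsym : (S t₀)ᵀ = S t₀) : (S t)ᵀ = S t := by
  have a0 : 0 ≤ a := (norm_nonneg _).trans (ha t₀ ⟨le_refl t₀, ht⟩)
  set E : ℝ → Matrix (Fin n) (Fin n) ℝ := fun τ => (S τ)ᵀ - S τ with hE
  set E' : ℝ → Matrix (Fin n) (Fin n) ℝ :=
    fun τ => -((𝒜 τ)ᵀ * E τ) - E τ * 𝒜 τ - θ • E τ with hE'
  have hmat : ∀ τ, (-(𝒜 τ)ᵀ * S τ - S τ * 𝒜 τ - θ • S τ + Cᵀ * C)ᵀ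
      - (-(𝒜 τ)ᵀ * S τ - S τ * 𝒜 τ - θ • S τ + Cᵀ * C) = E' τ := by
    intro τ
    simp only [hE', hE]
    simp only [Matrix.transpose_add, Matrix.transpose_sub, Matrix.transpose_mul,
      Matrix.transpose_smul, Matrix.transpose_neg, Matrix.transpose_transpose,
      neg_mul, mul_neg, mul_sub, sub_mul, smul_sub]
    abel
  set f : ℝ → (Fin n → Fin n → ℝ) := fun σ i j => E σ i j with hf
  set f' : ℝ → (Fin n → Fin n → ℝ) := fun σ i j => E' σ i j with hf'
  have hfderiv : ∀ τ ∈ Ico t₀ t, HasDerivWithinAt f (f' τ) (Ici τ) τ := by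
    intro τ hτ
    refine hasDerivWithinAt_pi.mpr fun i => hasDerivWithinAt_pi.mpr fun j => ?_
    have h1 := ((hS τ hτ.1 j i).fun_sub (hS τ hτ.1 i j)).mono
      (Ici_subset_Ici.mpr hτ.1)
    have hfunrw : (fun σ => S σ j i - S σ i j) = fun σ => f σ i j := by
      funext σ; rfl
    rw [hfunrw] at h1
    have hval : ((-(𝒜 τ)ᵀ * S τ - S τ * 𝒜 τ - θ • S τ + Cᵀ * C) j i)
        - ((-(𝒜 τ)ᵀ * S τ - S τ * 𝒜 τ - θ • S τ + Cᵀ * C) i j) = f' τ i j :=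
      congrFun (congrFun (hmat τ) i) j
    rw [← hval]
    exact h1
  have hfc : ContinuousOn f (Icc t₀ t) := by
    refine continuousOn_pi.mpr fun i => continuousOn_pi.mpr fun j => ?_
    have : ContinuousOn (fun σ => S σ j i - S σ i j) (Icc t₀ t) := fun σ hσ =>
      (((hS σ hσ.1 j i).sub (hS σ hσ.1 i j)).continuousWithinAt).mono
        (fun y hy => hy.1)
    have hfunrw : (fun σ => S σ j i - S σ i j) = fun σ => f σ i j := by
      funext σ; rfl
    rwa [hfunrw] at this
  have hf0 : ‖f t₀‖ ≤ 0 := by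
    have : f t₀ = 0 := by
      funext i j
      show S t₀ j i - S t₀ i j = 0
      have h' : S t₀ j i = S t₀ i j := congrFun (congrFun hsym i) j
      rw [h', sub_self]
    rw [this, norm_zero]
  set K : ℝ := 2 * n * a + |θ| with hK
  have hKnn : 0 ≤ K := by positivity
  have hbound : ∀ τ ∈ Ico t₀ t, ‖f' τ‖ ≤ K * ‖f τ‖ + 0 := by
    intro τ hτ
    rw [add_zero]
    have hEb : ∀ k l : Fin n, |E τ k l| ≤ ‖f τ‖ := fun k l =>
      le_trans (norm_le_pi_norm (f τ k) l) (norm_le_pi_norm (f τ) k)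
    have hab : ∀ k l : Fin n, |𝒜 τ k l| ≤ a :=
      entry_bound (𝒜 τ) (ha τ ⟨hτ.1, hτ.2.le⟩)
    refine pi_norm_le_iff_of_nonneg (by positivity) |>.mpr fun i => ?_
    refine pi_norm_le_iff_of_nonneg (by positivity) |>.mpr fun j => ?_
    rw [Real.norm_eq_abs]
    have hentry : f' τ i j = -(∑ k, 𝒜 τ k i * E τ k j) - (∑ k, E τ i k * 𝒜 τ k j)
        - θ * E τ i j := by
      show (-((𝒜 τ)ᵀ * E τ) - E τ * 𝒜 τ - θ • E τ) i j = _
      simp only [Matrix.sub_apply, Matrix.neg_apply, Matrix.mul_apply,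
        Matrix.transpose_apply, Matrix.smul_apply, smul_eq_mul]
    rw [hentry]
    have h1 : |∑ k, 𝒜 τ k i * E τ k j| ≤ n * (a * ‖f τ‖) := by
      calc |∑ k, 𝒜 τ k i * E τ k j| ≤ ∑ k, |𝒜 τ k i * E τ k j| :=
            Finset.abs_sum_le_sum_abs _ _
        _ ≤ ∑ _k : Fin n, a * ‖f τ‖ := Finset.sum_le_sum fun k _ => by
            rw [abs_mul]
            exact mul_le_mul (hab k i) (hEb k j) (abs_nonneg _) a0
        _ = n * (a * ‖f τ‖) := by
            rw [Finset.sum_const, Finset.card_univ, Fintype.card_fin, nsmul_eq_mul]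
    have h2 : |∑ k, E τ i k * 𝒜 τ k j| ≤ n * (a * ‖f τ‖) := by
      calc |∑ k, E τ i k * 𝒜 τ k j| ≤ ∑ k, |E τ i k * 𝒜 τ k j| :=
            Finset.abs_sum_le_sum_abs _ _
        _ ≤ ∑ _k : Fin n, a * ‖f τ‖ := Finset.sum_le_sum fun k _ => by
            rw [abs_mul, mul_comm (|E τ i k|)]
            exact mul_le_mul (hab k j) (hEb i k) (abs_nonneg _) a0
        _ = n * (a * ‖f τ‖) := by
            rw [Finset.sum_const, Finset.card_univ, Fintype.card_fin, nsmul_eq_mul]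
    have h3 : |θ * E τ i j| ≤ |θ| * ‖f τ‖ := by
      rw [abs_mul]
      exact mul_le_mul_of_nonneg_left (hEb i j) (abs_nonneg _)
    calc |-(∑ k, 𝒜 τ k i * E τ k j) - (∑ k, E τ i k * 𝒜 τ k j) - θ * E τ i j|
        ≤ |∑ k, 𝒜 τ k i * E τ k j| + |∑ k, E τ i k * 𝒜 τ k j| + |θ * E τ i j| := by
          calc _ ≤ |-(∑ k, 𝒜 τ k i * E τ k j) - (∑ k, E τ i k * 𝒜 τ k j)| + |θ * E τ i j| :=
                abs_sub _ _
            _ ≤ |∑ k, 𝒜 τ k i * E τ k j| + |∑ k, E τ i k * 𝒜 τ k j| + |θ * E τ i j| := by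
                have := abs_sub (-(∑ k, 𝒜 τ k i * E τ k j)) (∑ k, E τ i k * 𝒜 τ k j)
                rw [abs_neg] at this
                linarith
      _ ≤ K * ‖f τ‖ := by rw [hK]; push_cast; linarith
  have hgron := norm_le_gronwallBound_of_norm_deriv_right_le hfc hfderiv hf0 hbound
    t ⟨ht, le_refl t⟩
  rw [gronwallBound_ε0_δ0] at hgron
  have hft : f t = 0 := by
    have := norm_le_zero_iff.mp hgron
    exact this
  ext i j
  have h' : S t j i - S t i j = 0 := congrFun (congrFun hft i) j
  show S t j i = S t i j
  linarith


/-- Worst-case lower bound for the Lyapunov differential equation: if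
`‖𝒜(s)‖ ≤ a` (operator norm) on `[t₀,t]`, `S(t₀)` is symmetric and `S(t₀) ⪰ s_min·Id`
with `s_min ≥ 0`, then `S(t) ⪰ e^{−(θ+2a)(t−t₀)} s_min·Id`. -/
theorem lyapunov_worst_case_lower_bound
    {n : ℕ} (hn : 1 ≤ n) (C : Matrix (Fin 1) (Fin n) ℝ) (θ a : ℝ)
    (𝒜 : ℝ → Matrix (Fin n) (Fin n) ℝ) (h𝒜 : Continuous 𝒜)
    (t₀ t : ℝ) (ht : t₀ ≤ t)
    (ha : ∀ s ∈ Set.Icc t₀ t, ‖Matrix.toEuclideanCLM (𝕜 := ℝ) (𝒜 s)‖ ≤ a)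
    (S : ℝ → Matrix (Fin n) (Fin n) ℝ)
    (hS : ∀ τ ∈ Set.Ici t₀, ∀ i j, HasDerivWithinAt (fun σ => S σ i j)
      ((-(𝒜 τ)ᵀ * S τ - S τ * 𝒜 τ - θ • S τ + Cᵀ * C) i j) (Set.Ici t₀) τ)
    (s_min : ℝ) (hs_min : 0 ≤ s_min)
    (hsym : (S t₀)ᵀ = S t₀)
    (hlow : (S t₀ - s_min • (1 : Matrix (Fin n) (Fin n) ℝ)).PosSemidef) :
    (S t - (Real.exp (-(θ + 2 * a) * (t - t₀)) * s_min) •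
      (1 : Matrix (Fin n) (Fin n) ℝ)).PosSemidef := by
  have hsymt : (S t)ᵀ = S t := sym_pres C θ a 𝒜 t₀ t ht ha S hS hsym
  set cst : ℝ := Real.exp (-(θ + 2 * a) * (t - t₀)) * s_min with hcst
  have hunit : ∀ y : Fin n → ℝ, ∑ i, y i ^ 2 = 1 →
      0 ≤ y ⬝ᵥ (S t - cst • (1 : Matrix (Fin n) (Fin n) ℝ)) *ᵥ y := by
    intro y hy
    rw [Matrix.sub_mulVec, dotProduct_sub, quad_smul_one, hy, mul_one]
    set e : ℝ := Real.exp ((2 * a + |θ| + 1) * (t - t₀)) with hedef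
    have he : 0 < e := Real.exp_pos _
    have hlim : ∀ ε : ℝ, 0 < ε → cst - ε * e < y ⬝ᵥ S t *ᵥ y := by
      intro ε hε
      have hkc := key_claim hn C θ a 𝒜 t₀ t ht ha S hS s_min hs_min hlow ε hε t
        ⟨ht, le_refl t⟩ y hy
      rw [hcst, hedef]
      linarith
    by_contra hcon
    push_neg at hcon
    have hq : y ⬝ᵥ S t *ᵥ y < cst := by linarith
    have hε' : 0 < (cst - y ⬝ᵥ S t *ᵥ y) / e := div_pos (by linarith) he
    have h2 := hlim _ hε'
    rw [div_mul_cancel₀ _ (ne_of_gt he)] at h2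
    linarith
  refine Matrix.PosSemidef.of_dotProduct_mulVec_nonneg ?_ ?_
  · -- Hermitian
    rw [Matrix.IsHermitian, Matrix.conjTranspose_eq_transpose_of_trivial,
      Matrix.transpose_sub, Matrix.transpose_smul, Matrix.transpose_one, hsymt]
  · intro x
    have hstar : star x = x := by funext i; simp
    rw [hstar]
    exact quad_scale hunit x
end

section
/- Let n ≥ 1, C ∈ ℝ^{1×n}, θ ∈ ℝ, let 𝒜 : ℝ → ℝ^{n×n} be continuous, and on [t₀,t₁] let S : [t₀,t₁] → ℝ^{n×n} be differentiable with S(t) symmetric positive definite for every t and S'(t) = −𝒜(t)ᵀS(t) − S(t)𝒜(t) − θS(t) + CᵀC, and let ε : [t₀,t₁] → ℝⁿ be differentiable with ε'(t) = 𝒜(t)ε(t) − S(t)⁻¹CᵀCε(t). Then d/dt (ε(t)ᵀS(t)ε(t)) = −θ ε(t)ᵀS(t)ε(t) − |Cε(t)|² for all t ∈ [t₀,t₁], and consequently ε(t)ᵀS(t)ε(t) ≤ e^{−θ(t−t₀)} ε(t₀)ᵀS(t₀)ε(t₀) for all t ∈ [t₀,t₁]. -/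
open Matrix Set

lemma observer_quad_identity {n : ℕ} (C : Matrix (Fin 1) (Fin n) ℝ) (θ : ℝ)
    (𝒜 M : Matrix (Fin n) (Fin n) ℝ) (hM : M.PosDef) (a : Fin n → ℝ) :
    (𝒜 *ᵥ a - M⁻¹ *ᵥ ((Cᵀ * C) *ᵥ a)) ⬝ᵥ (M *ᵥ a)
      + a ⬝ᵥ ((-𝒜ᵀ * M - M * 𝒜 - θ • M + Cᵀ * C) *ᵥ a)
      + a ⬝ᵥ (M *ᵥ (𝒜 *ᵥ a - M⁻¹ *ᵥ ((Cᵀ * C) *ᵥ a)))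
      = -θ * (a ⬝ᵥ (M *ᵥ a)) - ((C *ᵥ a) 0) ^ 2 := by
  have hsym : Mᵀ = M := hM.isHermitian.eq
  have hdet : IsUnit M.det := isUnit_iff_ne_zero.mpr hM.det_pos.ne'
  have hMinv : M * M⁻¹ = 1 := Matrix.mul_nonsing_inv M hdet
  set w : Fin n → ℝ := (Cᵀ * C) *ᵥ a with hw
  have hcancel : M *ᵥ (M⁻¹ *ᵥ w) = w := by
    rw [mulVec_mulVec, hMinv, one_mulVec]
  have h1 : (M⁻¹ *ᵥ w) ⬝ᵥ (M *ᵥ a) = w ⬝ᵥ a := by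
    rw [dotProduct_mulVec, ← mulVec_transpose, hsym, hcancel]
  have h2 : a ⬝ᵥ (M *ᵥ (M⁻¹ *ᵥ w)) = a ⬝ᵥ w := by rw [hcancel]
  have hwa : w ⬝ᵥ a = ((C *ᵥ a) 0) ^ 2 := by
    rw [hw, ← mulVec_mulVec, dotProduct_comm, dotProduct_mulVec, vecMul_transpose]
    simp [dotProduct, Fin.sum_univ_one, sq]
  have hAt : a ⬝ᵥ ((𝒜ᵀ * M) *ᵥ a) = (𝒜 *ᵥ a) ⬝ᵥ (M *ᵥ a) := by
    rw [← mulVec_mulVec, dotProduct_mulVec, vecMul_transpose]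
  rw [sub_dotProduct, mulVec_sub, dotProduct_sub, h1, h2,
    Matrix.add_mulVec, Matrix.sub_mulVec, Matrix.sub_mulVec, Matrix.neg_mul,
    Matrix.neg_mulVec, dotProduct_add, dotProduct_sub, dotProduct_sub, dotProduct_neg,
    smul_mulVec, dotProduct_smul, hAt, ← mulVec_mulVec, ← hw, hwa]
  simp only [smul_eq_mul]; ring

/-- For the observer error `ε' = 𝒜ε − S⁻¹CᵀCε` along the Lyapunov differential
equation `S' = −𝒜ᵀS − S𝒜 − θS + CᵀC` with `S(t)` symmetric positive definite, one has
`d/dt (εᵀSε) = −θ εᵀSε − |Cε|²`, and consequently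
`ε(t)ᵀS(t)ε(t) ≤ e^{−θ(t−t₀)} ε(t₀)ᵀS(t₀)ε(t₀)` on `[t₀,t₁]`. -/
theorem observer_error_lyapunov_decay
    {n : ℕ} (hn : 1 ≤ n) (C : Matrix (Fin 1) (Fin n) ℝ) (θ t₀ t₁ : ℝ) (ht : t₀ ≤ t₁)
    (𝒜 : ℝ → Matrix (Fin n) (Fin n) ℝ) (h𝒜 : Continuous 𝒜)
    (S : ℝ → Matrix (Fin n) (Fin n) ℝ)
    (hSpos : ∀ t ∈ Set.Icc t₀ t₁, (S t).PosDef)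
    (hS : ∀ t ∈ Set.Icc t₀ t₁, ∀ i j, HasDerivWithinAt (fun τ => S τ i j)
      ((-(𝒜 t)ᵀ * S t - S t * 𝒜 t - θ • S t + Cᵀ * C) i j) (Set.Icc t₀ t₁) t)
    (ε : ℝ → Fin n → ℝ)
    (hε : ∀ t ∈ Set.Icc t₀ t₁, HasDerivWithinAt ε
      (𝒜 t *ᵥ ε t - (S t)⁻¹ *ᵥ ((Cᵀ * C) *ᵥ ε t)) (Set.Icc t₀ t₁) t) :
    (∀ t ∈ Set.Icc t₀ t₁,
      HasDerivWithinAt (fun τ => ε τ ⬝ᵥ (S τ *ᵥ ε τ))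
        (-θ * (ε t ⬝ᵥ (S t *ᵥ ε t)) - ((C *ᵥ ε t) 0) ^ 2) (Set.Icc t₀ t₁) t)
    ∧ ∀ t ∈ Set.Icc t₀ t₁,
        ε t ⬝ᵥ (S t *ᵥ ε t) ≤ Real.exp (-θ * (t - t₀)) * (ε t₀ ⬝ᵥ (S t₀ *ᵥ ε t₀)) := by
  have hderiv : ∀ t ∈ Set.Icc t₀ t₁,
      HasDerivWithinAt (fun τ => ε τ ⬝ᵥ (S τ *ᵥ ε τ))
        (-θ * (ε t ⬝ᵥ (S t *ᵥ ε t)) - ((C *ᵥ ε t) 0) ^ 2) (Set.Icc t₀ t₁) t := by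
    intro t htm
    set a := ε t with ha
    set a' := 𝒜 t *ᵥ ε t - (S t)⁻¹ *ᵥ ((Cᵀ * C) *ᵥ ε t) with ha'
    set M := S t with hM
    set M' := -(𝒜 t)ᵀ * S t - S t * 𝒜 t - θ • S t + Cᵀ * C with hM'
    have hεi : ∀ i, HasDerivWithinAt (fun τ => ε τ i) (a' i) (Set.Icc t₀ t₁) t :=
      fun i => hasDerivWithinAt_pi.mp (hε t htm) i
    have hsum : HasDerivWithinAt
        (fun τ => ∑ i, ∑ j, ε τ i * (S τ i j * ε τ j))
        (∑ i, ∑ j, (a' i * (M i j * a j) + a i * (M' i j * a j + M i j * a' j)))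
        (Set.Icc t₀ t₁) t := by
      apply HasDerivWithinAt.fun_sum
      intro i _
      apply HasDerivWithinAt.fun_sum
      intro j _
      exact (hεi i).mul ((hS t htm i j).mul (hεi j))
    have hfun : (fun τ => ε τ ⬝ᵥ (S τ *ᵥ ε τ))
        = fun τ => ∑ i, ∑ j, ε τ i * (S τ i j * ε τ j) := by
      funext τ
      simp [dotProduct, mulVec, Finset.mul_sum]
    rw [hfun]
    convert hsum using 1
    have hexp : (∑ i, ∑ j, (a' i * (M i j * a j) + a i * (M' i j * a j + M i j * a' j)))
        = a' ⬝ᵥ (M *ᵥ a) + a ⬝ᵥ (M' *ᵥ a) + a ⬝ᵥ (M *ᵥ a') := by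
      simp [dotProduct, mulVec, Finset.mul_sum, Finset.sum_add_distrib, mul_add, add_assoc]
    rw [hexp, ha', hM', hM, ha]
    exact (observer_quad_identity C θ (𝒜 t) (S t) (hSpos t htm) (ε t)).symm
  refine ⟨hderiv, ?_⟩
  -- second part
  set V : ℝ → ℝ := fun τ => ε τ ⬝ᵥ (S τ *ᵥ ε τ) with hV
  set g : ℝ → ℝ := fun τ => Real.exp (θ * (τ - t₀)) * V τ with hg
  have hgd : ∀ t ∈ Set.Icc t₀ t₁,
      HasDerivWithinAt g (-(Real.exp (θ * (t - t₀)) * ((C *ᵥ ε t) 0) ^ 2))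
        (Set.Icc t₀ t₁) t := by
    intro t htm
    have he : HasDerivWithinAt (fun τ => Real.exp (θ * (τ - t₀)))
        (Real.exp (θ * (t - t₀)) * θ) (Set.Icc t₀ t₁) t := by
      have : HasDerivAt (fun τ : ℝ => θ * (τ - t₀)) θ t := by
        simpa using ((hasDerivAt_id t).sub_const t₀).const_mul θ
      simpa using this.exp.hasDerivWithinAt
    have := he.fun_mul (hderiv t htm)
    convert this using 1
    · rfl
    · rfl
    ring
  have hanti : AntitoneOn g (Set.Icc t₀ t₁) := by
    apply antitoneOn_of_deriv_nonpos (convex_Icc t₀ t₁)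
    · exact fun x hx => (hgd x hx).continuousWithinAt
    · intro x hx
      rw [interior_Icc] at hx
      exact ((hgd x (Set.mem_Icc_of_Ioo hx)).hasDerivAt
        (Icc_mem_nhds hx.1 hx.2)).differentiableAt.differentiableWithinAt
    · intro x hx
      rw [interior_Icc] at hx
      have hd := (hgd x (Set.mem_Icc_of_Ioo hx)).hasDerivAt (Icc_mem_nhds hx.1 hx.2)
      rw [hd.deriv]
      exact neg_nonpos.mpr (mul_nonneg (Real.exp_nonneg _) (sq_nonneg _))
  intro t htm
  have ht0 : t₀ ∈ Set.Icc t₀ t₁ := Set.left_mem_Icc.mpr ht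
  have hle : g t ≤ g t₀ := hanti ht0 htm htm.1
  have hgt0 : g t₀ = V t₀ := by simp [hg]
  rw [hgt0] at hle
  have hpos : (0:ℝ) ≤ Real.exp (-θ * (t - t₀)) := (Real.exp_pos _).le
  have := mul_le_mul_of_nonneg_left hle hpos
  calc V t = Real.exp (-θ * (t - t₀)) * g t := by
        rw [hg]
        rw [← mul_assoc, ← Real.exp_add]
        simp [neg_mul]
    _ ≤ Real.exp (-θ * (t - t₀)) * V t₀ := this
end

section
/- Let n ≥ 1, C ∈ ℝ^{1×n}, θ ∈ ℝ, let 𝒜 : ℝ → ℝ^{n×n} be continuous, and on [t₀,t₁] let S : [t₀,t₁] → ℝ^{n×n} be differentiable with S(t) symmetric positive definite for every t and S'(t) = −𝒜(t)ᵀS(t) − S(t)𝒜(t) − θS(t) + CᵀC, and let ε : [t₀,t₁] → ℝⁿ be differentiable with ε'(t) = 𝒜(t)ε(t) − S(t)⁻¹CᵀCε(t). If s₁, s₂ > 0 are such that S(t) ⪰ s₁·Id for a given t ∈ [t₀,t₁] and S(t₀) ⪯ s₂·Id, then |ε(t)| ≤ e^{−(θ/2)(t−t₀)} √(s₂/s₁)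 |ε(t₀)|. -/
open Matrix Set

lemma aux_deriv_quad {n : ℕ} {s : Set ℝ} {τ : ℝ}
    {M : ℝ → Matrix (Fin n) (Fin n) ℝ} {M' : Matrix (Fin n) (Fin n) ℝ}
    {x : ℝ → Fin n → ℝ} {x' : Fin n → ℝ}
    (hM : ∀ i j, HasDerivWithinAt (fun τ => M τ i j) (M' i j) s τ)
    (hx : ∀ i, HasDerivWithinAt (fun τ => x τ i) (x' i) s τ) :
    HasDerivWithinAt (fun τ => x τ ⬝ᵥ (M τ *ᵥ x τ))
      (x' ⬝ᵥ (M τ *ᵥ x τ) + x τ ⬝ᵥ (M' *ᵥ x τ) + x τ ⬝ᵥ (M τ *ᵥ x')) s τ := by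
  have h : HasDerivWithinAt (fun τ => ∑ i, ∑ j, x τ i * (M τ i j * x τ j))
      (∑ i, ∑ j, (x' i * (M τ i j * x τ j)
        + x τ i * (M' i j * x τ j + M τ i j * x' j))) s τ := by
    apply HasDerivWithinAt.fun_sum
    intro i _
    apply HasDerivWithinAt.fun_sum
    intro j _
    exact (hx i).mul ((hM i j).mul (hx j))
  convert h using 1
  · funext τ'
    simp [dotProduct, mulVec, Finset.mul_sum]
  · simp [dotProduct, mulVec, Finset.mul_sum, mul_add, Finset.sum_add_distrib,
      mul_assoc, add_assoc]

lemma aux_alg {n : ℕ} (θ : ℝ) (C : Matrix (Fin 1) (Fin n) ℝ)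
    (A St : Matrix (Fin n) (Fin n) ℝ) (hsym : Stᵀ = St) (hdet : IsUnit St.det)
    (x : Fin n → ℝ) :
    (A *ᵥ x - St⁻¹ *ᵥ ((Cᵀ*C) *ᵥ x)) ⬝ᵥ (St *ᵥ x)
      + x ⬝ᵥ ((-Aᵀ*St - St*A - θ•St + Cᵀ*C) *ᵥ x)
      + x ⬝ᵥ (St *ᵥ (A *ᵥ x - St⁻¹ *ᵥ ((Cᵀ*C) *ᵥ x)))
    = -θ * (x ⬝ᵥ (St *ᵥ x)) - (C *ᵥ x) ⬝ᵥ (C *ᵥ x) := by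
  set w := (Cᵀ*C) *ᵥ x with hw
  have hinvsym : (St⁻¹)ᵀ = St⁻¹ := by rw [transpose_nonsing_inv, hsym]
  have f1 : St *ᵥ (St⁻¹ *ᵥ w) = w := by
    rw [mulVec_mulVec, Matrix.mul_nonsing_inv _ hdet, one_mulVec]
  have f2 : (St⁻¹ *ᵥ w) ⬝ᵥ (St *ᵥ x) = w ⬝ᵥ x := by
    rw [dotProduct_mulVec, ← hinvsym, mulVec_transpose, vecMul_vecMul,
      Matrix.nonsing_inv_mul _ hdet, vecMul_one]
  have f3 : (A *ᵥ x) ⬝ᵥ (St *ᵥ x) = x ⬝ᵥ ((Aᵀ*St) *ᵥ x) := by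
    rw [← mulVec_mulVec, ← vecMul_transpose, ← dotProduct_mulVec]
  have f4 : w ⬝ᵥ x = x ⬝ᵥ w := dotProduct_comm _ _
  have f5 : x ⬝ᵥ w = (C *ᵥ x) ⬝ᵥ (C *ᵥ x) := by
    rw [hw, ← mulVec_mulVec, dotProduct_mulVec, vecMul_transpose]
  simp only [sub_dotProduct, dotProduct_sub, mulVec_sub, add_mulVec, sub_mulVec,
    neg_mulVec, dotProduct_neg, neg_dotProduct, smul_mulVec, dotProduct_smul,
    dotProduct_add, add_dotProduct, Matrix.neg_mul, mulVec_add,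
    f1, f2, f3, f4, f5, mulVec_mulVec, smul_eq_mul]
  rw [show x ⬝ᵥ (Cᵀ * C) *ᵥ x = (C *ᵥ x) ⬝ᵥ (C *ᵥ x) from f5]
  ring

/-- For the observer error `ε' = 𝒜ε − S⁻¹CᵀCε` along the Lyapunov differential
equation with `S(t)` symmetric positive definite, if `S(t) ⪰ s₁·Id` at a given `t ∈ [t₀,t₁]`
and `S(t₀) ⪯ s₂·Id` with `s₁, s₂ > 0`, then
`|ε(t)| ≤ e^{−(θ/2)(t−t₀)} √(s₂/s₁) |ε(t₀)|`. -/
theorem observer_error_norm_bound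
    {n : ℕ} (hn : 1 ≤ n) (C : Matrix (Fin 1) (Fin n) ℝ) (θ t₀ t₁ : ℝ) (ht : t₀ ≤ t₁)
    (𝒜 : ℝ → Matrix (Fin n) (Fin n) ℝ) (h𝒜 : Continuous 𝒜)
    (S : ℝ → Matrix (Fin n) (Fin n) ℝ)
    (hSpos : ∀ t ∈ Set.Icc t₀ t₁, (S t).PosDef)
    (hS : ∀ t ∈ Set.Icc t₀ t₁, ∀ i j, HasDerivWithinAt (fun τ => S τ i j)
      ((-(𝒜 t)ᵀ * S t - S t * 𝒜 t - θ • S t + Cᵀ * C) i j) (Set.Icc t₀ t₁) t)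
    (ε : ℝ → EuclideanSpace ℝ (Fin n))
    (hε : ∀ t ∈ Set.Icc t₀ t₁, HasDerivWithinAt ε
      ((WithLp.toLp 2 (𝒜 t *ᵥ ε t - (S t)⁻¹ *ᵥ ((Cᵀ * C) *ᵥ ε t)) : EuclideanSpace ℝ (Fin n)))
      (Set.Icc t₀ t₁) t)
    (s₁ s₂ : ℝ) (hs₁ : 0 < s₁) (hs₂ : 0 < s₂)
    (t : ℝ) (htmem : t ∈ Set.Icc t₀ t₁)
    (hlow : (S t - s₁ • (1 : Matrix (Fin n) (Fin n) ℝ)).PosSemidef)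
    (hup : (s₂ • (1 : Matrix (Fin n) (Fin n) ℝ) - S t₀).PosSemidef) :
    ‖ε t‖ ≤ Real.exp (-(θ / 2) * (t - t₀)) * Real.sqrt (s₂ / s₁) * ‖ε t₀‖ := by
  have ht₀I : t₀ ∈ Set.Icc t₀ t₁ := ⟨le_refl _, ht⟩
  set V : ℝ → ℝ := fun τ => (ε τ) ⬝ᵥ (S τ *ᵥ (ε τ)) with hVdef
  -- derivative of V
  have hV : ∀ τ ∈ Set.Icc t₀ t₁, HasDerivWithinAt V
      (-θ * V τ - (C *ᵥ ε τ) ⬝ᵥ (C *ᵥ ε τ)) (Set.Icc t₀ t₁) τ := by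
    intro τ hτ
    have hx : ∀ i, HasDerivWithinAt (fun σ => ε σ i)
        ((𝒜 τ *ᵥ ε τ - (S τ)⁻¹ *ᵥ ((Cᵀ * C) *ᵥ ε τ)) i) (Set.Icc t₀ t₁) τ := by
      intro i
      exact (EuclideanSpace.proj (𝕜 := ℝ) i).hasFDerivAt.comp_hasDerivWithinAt τ (hε τ hτ)
    have h := aux_deriv_quad (hS τ hτ) hx
    have hsym : (S τ)ᵀ = S τ := by
      have := (hSpos τ hτ).1
      simpa [Matrix.IsHermitian] using this
    have hdet : IsUnit (S τ).det := by
      exact isUnit_iff_ne_zero.mpr (ne_of_gt (hSpos τ hτ).det_pos)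
    have halg := aux_alg θ C (𝒜 τ) (S τ) hsym hdet (ε τ)
    rw [halg] at h
    exact h
  -- the auxiliary function g
  set g : ℝ → ℝ := fun τ => Real.exp (θ * (τ - t₀)) * V τ with hgdef
  have hg : ∀ τ ∈ Set.Icc t₀ t₁, HasDerivWithinAt g
      (Real.exp (θ * (τ - t₀)) * (-((C *ᵥ ε τ) ⬝ᵥ (C *ᵥ ε τ)))) (Set.Icc t₀ t₁) τ := by
    intro τ hτ
    have he : HasDerivAt (fun σ : ℝ => Real.exp (θ * (σ - t₀)))
        (θ * Real.exp (θ * (τ - t₀))) τ := by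
      have h1 : HasDerivAt (fun σ : ℝ => θ * (σ - t₀)) θ τ := by
        simpa using ((hasDerivAt_id τ).sub_const t₀).const_mul θ
      simpa [mul_comm] using h1.exp
    have h2 := (he.hasDerivWithinAt).fun_mul (hV τ hτ)
    refine h2.congr_deriv ?_
    ring
  have hant : AntitoneOn g (Set.Icc t₀ t₁) := by
    apply antitoneOn_of_deriv_nonpos (convex_Icc _ _)
    · intro τ hτ; exact (hg τ hτ).continuousWithinAt
    · intro τ hτ
      rw [interior_Icc] at hτ
      exact (((hg τ (Ioo_subset_Icc_self hτ)).hasDerivAt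
        (Icc_mem_nhds hτ.1 hτ.2)).differentiableAt).differentiableWithinAt
    · intro τ hτ
      rw [interior_Icc] at hτ
      have hd := ((hg τ (Ioo_subset_Icc_self hτ)).hasDerivAt
        (Icc_mem_nhds hτ.1 hτ.2)).deriv
      rw [hd]
      have hq : 0 ≤ (C *ᵥ ε τ) ⬝ᵥ (C *ᵥ ε τ) :=
        Finset.sum_nonneg fun i _ => mul_self_nonneg _
      exact mul_nonpos_of_nonneg_of_nonpos (Real.exp_pos _).le (by linarith)
  have hgle : g t ≤ g t₀ := hant ht₀I htmem htmem.1
  have hVt : Real.exp (θ * (t - t₀)) * V t ≤ V t₀ := by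
    simpa [hgdef] using hgle
  -- norms vs dot products
  have hnorm : ∀ τ : ℝ, (ε τ) ⬝ᵥ (ε τ) = ‖ε τ‖ ^ 2 := by
    intro τ
    rw [← real_inner_self_eq_norm_sq]
    simp [PiLp.inner_apply, RCLike.inner_apply, dotProduct, mul_comm]
    rw [EuclideanSpace.norm_eq, Real.sq_sqrt (by positivity)]
    simp [Real.norm_eq_abs, sq]
  have h1 : s₁ * ‖ε t‖ ^ 2 ≤ V t := by
    have h0 := hlow.dotProduct_mulVec_nonneg (ε t)
    simp only [star_trivial, sub_mulVec, dotProduct_sub, smul_mulVec,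
      one_mulVec, dotProduct_smul, smul_eq_mul, hnorm t] at h0
    simp only [hVdef]
    linarith
  have h2 : V t₀ ≤ s₂ * ‖ε t₀‖ ^ 2 := by
    have h0 := hup.dotProduct_mulVec_nonneg (ε t₀)
    simp only [star_trivial, sub_mulVec, dotProduct_sub, smul_mulVec,
      one_mulVec, dotProduct_smul, smul_eq_mul, hnorm t₀] at h0
    simp only [hVdef]
    linarith
  -- combine
  have e1 : Real.exp (-(θ * (t - t₀))) * Real.exp (θ * (t - t₀)) = 1 := by
    rw [← Real.exp_add]; simp
  have h3 : V t ≤ Real.exp (-(θ * (t - t₀))) * V t₀ := by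
    have := mul_le_mul_of_nonneg_left hVt (Real.exp_pos (-(θ * (t - t₀)))).le
    calc V t = Real.exp (-(θ * (t - t₀))) * (Real.exp (θ * (t - t₀)) * V t) := by
          rw [← mul_assoc, e1, one_mul]
      _ ≤ Real.exp (-(θ * (t - t₀))) * V t₀ := this
  set R := Real.exp (-(θ / 2) * (t - t₀)) * Real.sqrt (s₂ / s₁) * ‖ε t₀‖ with hRdef
  have hR : 0 ≤ R := by positivity
  have hRsq : R ^ 2 = Real.exp (-(θ * (t - t₀))) * (s₂ / s₁) * ‖ε t₀‖ ^ 2 := by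
    rw [hRdef, mul_pow, mul_pow, Real.sq_sqrt (by positivity),
      sq, ← Real.exp_add]
    ring_nf
  have hsq : ‖ε t‖ ^ 2 ≤ R ^ 2 := by
    rw [hRsq, show Real.exp (-(θ * (t - t₀))) * (s₂ / s₁) * ‖ε t₀‖ ^ 2
        = (Real.exp (-(θ * (t - t₀))) * s₂ * ‖ε t₀‖ ^ 2) / s₁ by ring,
      le_div_iff₀ hs₁]
    have h4 : Real.exp (-(θ * (t - t₀))) * V t₀
        ≤ Real.exp (-(θ * (t - t₀))) * (s₂ * ‖ε t₀‖ ^ 2) :=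
      mul_le_mul_of_nonneg_left h2 (Real.exp_pos _).le
    nlinarith [h1, h3, h4]
  calc ‖ε t‖ = Real.sqrt (‖ε t‖ ^ 2) := (Real.sqrt_sq (norm_nonneg _)).symm
    _ ≤ Real.sqrt (R ^ 2) := Real.sqrt_le_sqrt hsq
    _ = R := Real.sqrt_sq hR
end

section
/- Let n ≥ 1, C ∈ ℝ^{1×n}, T > 0, let 𝒜 : ℝ → ℝ^{n×n} be continuous, X a fundamental solution with transition matrix Φ(t,s) = X(s)X(t)⁻¹, and G(t₀,t₁) = ∫_{t₀}^{t₁} Φ(t₁,s)ᵀCᵀCΦ(t₁,s) ds. Then the map t ↦ G(t−T, t) is differentiable and d/dt G(t−T,t) = −𝒜(t)ᵀG(t−T,t) − G(t−T,t)𝒜(t) + CᵀC − Φ(t,t−T)ᵀCᵀCΦ(t,t−T) for all t ∈ ℝ. -/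
open Matrix Set

private theorem hasDerivAt_mul_entry {n m p : ℕ}
    {A : ℝ → Matrix (Fin n) (Fin m) ℝ} {B : ℝ → Matrix (Fin m) (Fin p) ℝ}
    {A' : Matrix (Fin n) (Fin m) ℝ} {B' : Matrix (Fin m) (Fin p) ℝ} {t : ℝ}
    (hA : ∀ i j, HasDerivAt (fun τ => A τ i j) (A' i j) t)
    (hB : ∀ i j, HasDerivAt (fun τ => B τ i j) (B' i j) t) :
    ∀ i j, HasDerivAt (fun τ => (A τ * B τ) i j) ((A' * B t + A t * B') i j) t := by
  intro i j
  have h := HasDerivAt.fun_sum (u := Finset.univ)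
    (fun k _ => ((hA i k).mul (hB k j)))
  simpa [Matrix.mul_apply, Matrix.add_apply, Finset.sum_add_distrib] using h

private theorem differentiableAt_det {n : ℕ} {M : ℝ → Matrix (Fin n) (Fin n) ℝ} {t : ℝ}
    (h : ∀ i j, DifferentiableAt ℝ (fun τ => M τ i j) t) :
    DifferentiableAt ℝ (fun τ => (M τ).det) t := by
  simp only [Matrix.det_apply']
  exact DifferentiableAt.fun_sum fun σ _ =>
    (DifferentiableAt.fun_finsetProd (fun i _ => h (σ i) i)).const_mul _

example : True := trivial

private theorem differentiableAt_inv_entry {n : ℕ} {M : ℝ → Matrix (Fin n) (Fin n) ℝ} {t : ℝ}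
    (h : ∀ τ i j, DifferentiableAt ℝ (fun u => M u i j) τ)
    (hdet : (M t).det ≠ 0) :
    ∀ i j, DifferentiableAt ℝ (fun u => (M u)⁻¹ i j) t := by
  intro i j
  have hadj : DifferentiableAt ℝ (fun u => (M u).adjugate i j) t := by
    simp only [Matrix.adjugate_apply]
    apply differentiableAt_det
    intro k l
    simp only [Matrix.updateRow_apply]
    by_cases hk : k = j
    · simp [hk]
    · simp only [hk, if_false]; exact h t k l
  have hd : DifferentiableAt ℝ (fun u => ((M u).det)⁻¹) t :=
    (differentiableAt_det (h t)).inv hdet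
  have : (fun u => (M u)⁻¹ i j) = fun u => ((M u).det)⁻¹ * (M u).adjugate i j := by
    funext u
    rw [Matrix.inv_def, Matrix.smul_apply, smul_eq_mul, Ring.inverse_eq_inv]
  rw [this]
  exact hd.mul hadj

/-- The sliding-window observability Gramian
`G(t−T,t) = ∫_{t−T}^{t} Φ(t,s)ᵀ CᵀC Φ(t,s) ds` (with `Φ(t,s) = X(s) X(t)⁻¹`) satisfies
`d/dt G(t−T,t) = −𝒜(t)ᵀG(t−T,t) − G(t−T,t)𝒜(t) + CᵀC − Φ(t,t−T)ᵀCᵀCΦ(t,t−T)`.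
(Stated entrywise.) -/
theorem sliding_gramian_deriv
    {n : ℕ} (hn : 1 ≤ n) (C : Matrix (Fin 1) (Fin n) ℝ) (T : ℝ) (hT : 0 < T)
    (𝒜 X : ℝ → Matrix (Fin n) (Fin n) ℝ)
    (h𝒜 : Continuous 𝒜)
    (hX : ∀ t : ℝ, ∀ i j, HasDerivAt (fun τ => X τ i j) ((𝒜 t * X t) i j) t)
    (hXinv : ∀ t : ℝ, IsUnit (X t))
    (G : ℝ → ℝ → Matrix (Fin n) (Fin n) ℝ)
    (hG : ∀ t₀ t₁ : ℝ, G t₀ t₁ = Matrix.of fun i j =>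
      ∫ s in t₀..t₁, ((X s * (X t₁)⁻¹)ᵀ * Cᵀ * C * (X s * (X t₁)⁻¹)) i j) :
    ∀ t : ℝ, ∀ i j,
      HasDerivAt (fun τ => G (τ - T) τ i j)
        ((-(𝒜 t)ᵀ * G (t - T) t - G (t - T) t * 𝒜 t + Cᵀ * C
          - (X (t - T) * (X t)⁻¹)ᵀ * Cᵀ * C * (X (t - T) * (X t)⁻¹)) i j) t := by
  intro t i j
  have hXc : Continuous X := continuous_matrix fun i j =>
    continuous_iff_continuousAt.mpr fun s => (hX s i j).differentiableAt.continuousAt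
  set Y : ℝ → Matrix (Fin n) (Fin n) ℝ := fun s => (X s)ᵀ * Cᵀ * C * X s with hYdef
  have hYc : Continuous Y :=
    ((hXc.matrix_transpose.matrix_mul continuous_const).matrix_mul continuous_const).matrix_mul hXc
  set Z : ℝ → Matrix (Fin n) (Fin n) ℝ := fun u => (X u)⁻¹ with hZdef
  have hZapp : ∀ τ, Z τ = (X τ)⁻¹ := fun τ => rfl
  have hdetne : ∀ τ, (X τ).det ≠ 0 := fun τ =>
    ((Matrix.isUnit_iff_isUnit_det _).mp (hXinv τ)).ne_zero
  have hZdiff : ∀ (τ : ℝ) (i j : Fin n), DifferentiableAt ℝ (fun u => Z u i j) τ := fun τ i j =>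
    differentiableAt_inv_entry (fun τ i j => (hX τ i j).differentiableAt) (hdetne τ) i j
  have hXZ : ∀ τ, X τ * Z τ = 1 := fun τ =>
    Matrix.mul_nonsing_inv _ ((Matrix.isUnit_iff_isUnit_det _).mp (hXinv τ))
  have hZX1 : ∀ τ, Z τ * X τ = 1 := fun τ =>
    Matrix.nonsing_inv_mul _ ((Matrix.isUnit_iff_isUnit_det _).mp (hXinv τ))
  -- the matrix F
  set F : ℝ → Matrix (Fin n) (Fin n) ℝ :=
    fun τ => Matrix.of fun k l => ∫ s in (τ - T)..τ, Y s k l with hFdef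
  have hF : ∀ (k l : Fin n), HasDerivAt (fun τ => F τ k l) ((Y t - Y (t - T)) k l) t := by
    intro k l
    have hc : Continuous fun s => Y s k l := hYc.matrix_elem k l
    have h1 : ∀ b : ℝ, HasDerivAt (fun u => ∫ s in (0:ℝ)..u, Y s k l) (Y b k l) b := fun b =>
      intervalIntegral.integral_hasDerivAt_right (hc.intervalIntegrable _ _)
        (hc.stronglyMeasurableAtFilter _ _) hc.continuousAt
    have h2 : HasDerivAt (fun u => ∫ s in (0:ℝ)..(u - T), Y s k l) (Y (t - T) k l) t := by
      have hin : HasDerivAt (fun u : ℝ => u - T) 1 t := (hasDerivAt_id t).sub_const T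
      simpa [Function.comp_def] using (h1 (t - T)).comp t hin
    have key : (fun τ => F τ k l)
        = fun τ => (∫ s in (0:ℝ)..τ, Y s k l) - ∫ s in (0:ℝ)..(τ - T), Y s k l := by
      funext τ
      rw [intervalIntegral.integral_interval_sub_left (hc.intervalIntegrable _ _)
        (hc.intervalIntegrable _ _)]
      rfl
    rw [key]
    simpa [Matrix.sub_apply, Pi.sub_def] using (h1 t).sub h2
  -- G in terms of F and Z
  have hGrep : ∀ τ, G (τ - T) τ = (Z τ)ᵀ * F τ * Z τ := by
    intro τ
    rw [hG]
    ext i j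
    have hint : ∀ s, ((X s * (X τ)⁻¹)ᵀ * Cᵀ * C * (X s * (X τ)⁻¹)) i j
        = ∑ k, ∑ l, Z τ k i * Y s k l * Z τ l j := by
      intro s
      have heq : (X s * (X τ)⁻¹)ᵀ * Cᵀ * C * (X s * (X τ)⁻¹) = (Z τ)ᵀ * (Y s * Z τ) := by
        rw [hZapp, hYdef]
        simp only [Matrix.transpose_mul, Matrix.mul_assoc]
      rw [heq, Matrix.mul_apply]
      refine Finset.sum_congr rfl fun k _ => ?_
      rw [Matrix.transpose_apply, Matrix.mul_apply, Finset.mul_sum]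
      exact Finset.sum_congr rfl fun l _ => by ring
    have hcont : ∀ (k l : Fin n), Continuous fun s => Z τ k i * Y s k l * Z τ l j :=
      fun k l => (continuous_const.mul (hYc.matrix_elem k l)).mul continuous_const
    calc (Matrix.of fun i j =>
            ∫ s in (τ - T)..τ, ((X s * (X τ)⁻¹)ᵀ * Cᵀ * C * (X s * (X τ)⁻¹)) i j) i j
        = ∫ s in (τ - T)..τ, ∑ k, ∑ l, Z τ k i * Y s k l * Z τ l j := by
          simp only [Matrix.of_apply]; exact intervalIntegral.integral_congr fun s _ => hint s
      _ = ∑ k, ∑ l, ∫ s in (τ - T)..τ, Z τ k i * Y s k l * Z τ l j := by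
          rw [intervalIntegral.integral_finset_sum
            (fun k _ => (continuous_finset_sum _ fun l _ => hcont k l).intervalIntegrable _ _)]
          exact Finset.sum_congr rfl fun k _ =>
            intervalIntegral.integral_finset_sum fun l _ => (hcont k l).intervalIntegrable _ _
      _ = ∑ k, ∑ l, Z τ k i * F τ k l * Z τ l j := by
          refine Finset.sum_congr rfl fun k _ => Finset.sum_congr rfl fun l _ => ?_
          rw [intervalIntegral.integral_mul_const, intervalIntegral.integral_const_mul]
          rfl
      _ = ((Z τ)ᵀ * F τ * Z τ) i j := by
          rw [Matrix.mul_apply, Finset.sum_comm]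
          refine Finset.sum_congr rfl fun l _ => ?_
          rw [Matrix.mul_apply, Finset.sum_mul]
          exact Finset.sum_congr rfl fun k _ => by rw [Matrix.transpose_apply]
  -- derivative of Z
  set Z' : Matrix (Fin n) (Fin n) ℝ := Matrix.of fun i j => deriv (fun u => Z u i j) t with hZ'def
  have hZ' : ∀ (i j : Fin n), HasDerivAt (fun u => Z u i j) (Z' i j) t := fun i j =>
    (hZdiff t i j).hasDerivAt
  have hzero : Z' * X t + Z t * (𝒜 t * X t) = 0 := by
    ext i j
    have hd := hasDerivAt_mul_entry hZ' (hX t) i j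
    have h0 : HasDerivAt (fun u => (Z u * X u) i j) 0 t := by
      have hcst : (fun u => (Z u * X u) i j) = fun _ => (1 : Matrix (Fin n) (Fin n) ℝ) i j := by
        funext u; rw [hZX1 u]
      rw [hcst]; exact hasDerivAt_const _ _
    simpa using hd.unique h0
  have hZ'eq : Z' = -(Z t * 𝒜 t) := by
    have h1 : (Z' + Z t * 𝒜 t) * X t = 0 := by
      rw [Matrix.add_mul, Matrix.mul_assoc]; exact hzero
    have h2 : Z' + Z t * 𝒜 t = 0 := by
      calc Z' + Z t * 𝒜 t = (Z' + Z t * 𝒜 t) * (X t * Z t) := by rw [hXZ, mul_one]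
        _ = ((Z' + Z t * 𝒜 t) * X t) * Z t := by rw [Matrix.mul_assoc]
        _ = 0 := by rw [h1, Matrix.zero_mul]
    exact eq_neg_of_add_eq_zero_left h2
  have hZmain : ∀ (i j : Fin n), HasDerivAt (fun u => Z u i j) ((-(Z t * 𝒜 t)) i j) t := by
    intro i j; rw [← hZ'eq]; exact hZ' i j
  have hZT : ∀ (i j : Fin n),
      HasDerivAt (fun u => (Z u)ᵀ i j) ((-(Z t * 𝒜 t))ᵀ i j) t := fun i j => by
    simpa [Matrix.transpose_apply] using hZmain j i
  -- triple product derivative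
  have h1 := hasDerivAt_mul_entry (A := fun u => (Z u)ᵀ) (B := F) hZT hF
  have h2 := hasDerivAt_mul_entry (A := fun u => (Z u)ᵀ * F u) h1 hZmain
  -- rewrite target
  have e1 : Cᵀ * C = (Z t)ᵀ * Y t * Z t := by
    have : (Z t)ᵀ * Y t * Z t = (X t * Z t)ᵀ * (Cᵀ * C) * (X t * Z t) := by
      rw [hYdef]; simp only [Matrix.transpose_mul, Matrix.mul_assoc]
    rw [this, hXZ]; simp
  have e2 : (X (t - T) * (X t)⁻¹)ᵀ * Cᵀ * C * (X (t - T) * (X t)⁻¹)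
      = (Z t)ᵀ * Y (t - T) * Z t := by
    rw [hZapp, hYdef]
    simp only [Matrix.transpose_mul, Matrix.mul_assoc]
  have hval : ((-(Z t * 𝒜 t))ᵀ * F t + (Z t)ᵀ * (Y t - Y (t - T))) * Z t
        + ((Z t)ᵀ * F t) * (-(Z t * 𝒜 t))
      = -(𝒜 t)ᵀ * ((Z t)ᵀ * F t * Z t) - ((Z t)ᵀ * F t * Z t) * 𝒜 t
        + (Z t)ᵀ * Y t * Z t - (Z t)ᵀ * Y (t - T) * Z t := by
    simp only [Matrix.transpose_neg, Matrix.transpose_mul]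
    noncomm_ring
  have hfun : (fun τ => G (τ - T) τ i j) = fun τ => ((Z τ)ᵀ * F τ * Z τ) i j :=
    funext fun τ => by rw [hGrep τ]
  rw [hfun, hGrep t, e1, e2, ← hval]
  exact h2 i j
end

section
/- Let n ≥ 1, A ∈ ℝ^{n×n}, C ∈ ℝ^{1×n}, and β > 2‖A‖ (operator norm). Then S∞ := ∫₀^∞ e^{−βs} exp(−sAᵀ) CᵀC exp(−sA) ds converges, is the unique symmetric matrix satisfying the Lyapunov equation AᵀS + SA + βS = CᵀC, and is positive semidefinite. Moreover S∞ is positive definite if and only if the pair (C,A) is observable, i.e., for every x ∈ ℝⁿ, (C·exp(tA)·x = 0 for all t ≥ 0) implies x = 0. -/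
open Matrix Set

section LyapunovAux
open MeasureTheory


section helpers
open scoped Matrix.Norms.L2Operator
variable {n : ℕ}

lemma euclid_coord_le (x : EuclideanSpace ℝ (Fin n)) (i : Fin n) : |x i| ≤ ‖x‖ := by
  rw [EuclideanSpace.norm_eq, ← Real.sqrt_sq_eq_abs]
  refine Real.sqrt_le_sqrt ?_
  calc x i ^ 2 ≤ ∑ j, x j ^ 2 :=
        Finset.single_le_sum (f := fun j => x j ^ 2) (fun j _ => sq_nonneg _) (Finset.mem_univ i)
    _ = ∑ j, ‖x j‖ ^ 2 := by simp [Real.norm_eq_abs, sq_abs]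

lemma matrix_norm_one_le : ‖(1 : Matrix (Fin n) (Fin n) ℝ)‖ ≤ 1 := by
  rw [Matrix.cstar_norm_def, _root_.map_one]
  exact ContinuousLinearMap.norm_id_le

lemma matrix_abs_entry_le (X : Matrix (Fin n) (Fin n) ℝ) (i j : Fin n) : |X i j| ≤ ‖X‖ := by
  classical
  have h := Matrix.l2_opNorm_mulVec X ((EuclideanSpace.equiv (Fin n) ℝ).symm (Pi.single j 1))
  have hx : ‖(EuclideanSpace.equiv (Fin n) ℝ).symm (Pi.single j (1:ℝ))‖ = 1 := by
    simpa using EuclideanSpace.norm_single (𝕜 := ℝ) j (1:ℝ)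
  rw [hx, mul_one] at h
  have hcoord : |X i j| ≤
      ‖(EuclideanSpace.equiv (Fin n) ℝ).symm <|
        X *ᵥ ((EuclideanSpace.equiv (Fin n) ℝ).symm (Pi.single j 1))‖ := by
    have h2 := euclid_coord_le ((EuclideanSpace.equiv (Fin n) ℝ).symm <|
      X *ᵥ ((EuclideanSpace.equiv (Fin n) ℝ).symm (Pi.single j 1))) i
    simpa [Matrix.mulVec, dotProduct, EuclideanSpace.single_apply] using h2
  exact hcoord.trans h

lemma matrix_norm_exp_le (X : Matrix (Fin n) (Fin n) ℝ) :
    ‖NormedSpace.exp X‖ ≤ Real.exp ‖X‖ := by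
  rw [NormedSpace.exp_eq_tsum (𝕂 := ℝ)]
  refine (norm_tsum_le_tsum_norm (NormedSpace.norm_expSeries_summable' (𝕂 := ℝ) X)).trans ?_
  rw [Real.exp_eq_exp_ℝ, NormedSpace.exp_eq_tsum_div]
  refine Summable.tsum_le_tsum (fun k => ?_) (NormedSpace.norm_expSeries_summable' (𝕂 := ℝ) X)
    ((Real.summable_pow_div_factorial ‖X‖))
  rw [norm_smul, norm_inv, Real.norm_natCast, div_eq_inv_mul]
  rcases Nat.eq_zero_or_pos k with hk | hk
  · subst hk; simpa using matrix_norm_one_le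
  · exact mul_le_mul_of_nonneg_left ((norm_pow_le' X hk)) (by positivity)
end helpers

section core
open scoped Matrix.Norms.L2Operator
variable {n : ℕ}

noncomputable def MK (A : Matrix (Fin n) (Fin n) ℝ) (β : ℝ) (K : Matrix (Fin n) (Fin n) ℝ)
    (s : ℝ) : Matrix (Fin n) (Fin n) ℝ :=
  Real.exp (-β * s) • (NormedSpace.exp ((-s) • Aᵀ) * K * NormedSpace.exp ((-s) • A))

noncomputable def entryCLM (i j : Fin n) : Matrix (Fin n) (Fin n) ℝ →L[ℝ] ℝ :=
  LinearMap.toContinuousLinearMap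
    ((LinearMap.proj j).comp (LinearMap.proj (R := ℝ) (φ := fun _ : Fin n => Fin n → ℝ) i))

@[simp] lemma entryCLM_apply (i j : Fin n) (X : Matrix (Fin n) (Fin n) ℝ) :
    entryCLM i j X = X i j := rfl

lemma transpose_norm (A : Matrix (Fin n) (Fin n) ℝ) : ‖Aᵀ‖ = ‖A‖ := by
  have h : Aᴴ = Aᵀ := by ext i j; simp [Matrix.conjTranspose_apply]
  rw [← h, Matrix.l2_opNorm_conjTranspose]

lemma exp_neg_smul_norm_le (A : Matrix (Fin n) (Fin n) ℝ) {s : ℝ} (hs : 0 ≤ s) :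
    ‖NormedSpace.exp ((-s) • A)‖ ≤ Real.exp (s * ‖A‖) := by
  have h := matrix_norm_exp_le ((-s) • A)
  rwa [norm_smul, Real.norm_eq_abs, abs_neg, abs_of_nonneg hs] at h

lemma MK_norm_le (A : Matrix (Fin n) (Fin n) ℝ) (β : ℝ) (K : Matrix (Fin n) (Fin n) ℝ)
    {s : ℝ} (hs : 0 ≤ s) :
    ‖MK A β K s‖ ≤ ‖K‖ * Real.exp ((2 * ‖A‖ - β) * s) := by
  have hE' := exp_neg_smul_norm_le Aᵀ hs
  have hE := exp_neg_smul_norm_le A hs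
  rw [transpose_norm] at hE'
  have h1 : ‖NormedSpace.exp ((-s) • Aᵀ) * K * NormedSpace.exp ((-s) • A)‖ ≤
      Real.exp (s * ‖A‖) * ‖K‖ * Real.exp (s * ‖A‖) := by
    calc ‖NormedSpace.exp ((-s) • Aᵀ) * K * NormedSpace.exp ((-s) • A)‖
        ≤ ‖NormedSpace.exp ((-s) • Aᵀ) * K‖ * ‖NormedSpace.exp ((-s) • A)‖ :=
          norm_mul_le _ _
      _ ≤ (‖NormedSpace.exp ((-s) • Aᵀ)‖ * ‖K‖) * ‖NormedSpace.exp ((-s) • A)‖ := by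
          gcongr; exact norm_mul_le _ _
      _ ≤ Real.exp (s * ‖A‖) * ‖K‖ * Real.exp (s * ‖A‖) := by gcongr
  have h0 : ‖MK A β K s‖ = Real.exp (-β * s) *
      ‖NormedSpace.exp ((-s) • Aᵀ) * K * NormedSpace.exp ((-s) • A)‖ := by
    rw [MK, norm_smul, Real.norm_eq_abs, Real.abs_exp]
  calc ‖MK A β K s‖
      ≤ Real.exp (-β * s) * (Real.exp (s * ‖A‖) * ‖K‖ * Real.exp (s * ‖A‖)) := by
        rw [h0]; exact mul_le_mul_of_nonneg_left h1 (Real.exp_pos _).le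
    _ = ‖K‖ * (Real.exp (-β * s) * Real.exp (s * ‖A‖) * Real.exp (s * ‖A‖)) := by ring
    _ = ‖K‖ * Real.exp ((2 * ‖A‖ - β) * s) := by
        rw [← Real.exp_add, ← Real.exp_add]; congr 1; ring

lemma hasDerivAt_MK (A : Matrix (Fin n) (Fin n) ℝ) (β : ℝ) (K : Matrix (Fin n) (Fin n) ℝ)
    (s : ℝ) : HasDerivAt (MK A β K)
      (-β • MK A β K s - (Aᵀ * MK A β K s + MK A β K s * A)) s := by
  have hE' : HasDerivAt (fun u : ℝ => NormedSpace.exp ((-u) • Aᵀ))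
      (-Aᵀ * NormedSpace.exp ((-s) • Aᵀ)) s := by
    have h := hasDerivAt_exp_smul_const' (𝕂 := ℝ) (-Aᵀ) s
    simpa [smul_neg, ← neg_smul] using h
  have hE : HasDerivAt (fun u : ℝ => NormedSpace.exp ((-u) • A))
      (NormedSpace.exp ((-s) • A) * -A) s := by
    have h := hasDerivAt_exp_smul_const (𝕂 := ℝ) (-A) s
    simpa [smul_neg, ← neg_smul] using h
  have h2 : HasDerivAt (fun u : ℝ =>
      NormedSpace.exp ((-u) • Aᵀ) * K * NormedSpace.exp ((-u) • A))
      ((-Aᵀ * NormedSpace.exp ((-s) • Aᵀ)) * K * NormedSpace.exp ((-s) • A)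
        + (NormedSpace.exp ((-s) • Aᵀ) * K) * (NormedSpace.exp ((-s) • A) * -A)) s :=
    (hE'.mul_const K).mul hE
  have h3 : HasDerivAt (fun u : ℝ => Real.exp (-β * u)) (Real.exp (-β * s) * (-β)) s := by
    simpa using ((hasDerivAt_id s).const_mul (-β)).exp
  have h4 := h3.smul h2
  refine h4.congr_deriv ?_; symm
  set E' := NormedSpace.exp ((-s) • Aᵀ)
  set E := NormedSpace.exp ((-s) • A)
  show -β • MK A β K s - (Aᵀ * MK A β K s + MK A β K s * A) = _
  rw [MK]
  set N := E' * K * E with hN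
  have e1 : -Aᵀ * E' * K * E = -(Aᵀ * N) := by rw [hN]; noncomm_ring
  have e2 : (E' * K) * (E * -A) = -(N * A) := by rw [hN]; noncomm_ring
  rw [show (-Aᵀ * E') * K * E = -Aᵀ * E' * K * E from by noncomm_ring, e1, e2]
  have hAT : Aᵀ * (Real.exp (-β * s) • N) = Real.exp (-β * s) • (Aᵀ * N) := by
    rw [Matrix.mul_smul]
  have hA : (Real.exp (-β * s) • N) * A = Real.exp (-β * s) • (N * A) := by
    rw [Matrix.smul_mul]
  rw [hAT, hA]
  module


lemma MK_continuous (A : Matrix (Fin n) (Fin n) ℝ) (β : ℝ) (K : Matrix (Fin n) (Fin n) ℝ) :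
    Continuous (MK A β K) := by
  have he : Continuous fun s : ℝ => NormedSpace.exp ((-s) • A) := by
    letI : NormedAlgebra ℚ (Matrix (Fin n) (Fin n) ℝ) := NormedAlgebra.restrictScalars ℚ ℝ _; exact NormedSpace.exp_continuous.comp ((continuous_neg.smul continuous_const))
  have he' : Continuous fun s : ℝ => NormedSpace.exp ((-s) • Aᵀ) := by
    letI : NormedAlgebra ℚ (Matrix (Fin n) (Fin n) ℝ) := NormedAlgebra.restrictScalars ℚ ℝ _; exact NormedSpace.exp_continuous.comp ((continuous_neg.smul continuous_const))
  exact ((Real.continuous_exp.comp (continuous_const.mul continuous_id))).smul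
    (((he'.mul continuous_const)).mul he)

lemma MK_entry_integrableOn (A : Matrix (Fin n) (Fin n) ℝ) {β : ℝ}
    (hb : 2 * ‖Matrix.toEuclideanCLM (𝕜 := ℝ) A‖ < β) (K : Matrix (Fin n) (Fin n) ℝ)
    (i j : Fin n) : IntegrableOn (fun s => MK A β K s i j) (Ioi (0:ℝ)) := by
  have hb' : 0 < β - 2 * ‖A‖ := by
    have : 2 * ‖A‖ < β := hb
    linarith
  have hg : IntegrableOn (fun s => ‖K‖ * Real.exp (-(β - 2 * ‖A‖) * s)) (Ioi (0:ℝ)) :=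
    (exp_neg_integrableOn_Ioi 0 hb').const_mul _
  refine Integrable.mono' hg ?_ ?_
  · have hc : Continuous fun s => MK A β K s i j :=
      (continuous_apply j).comp ((continuous_apply i).comp (MK_continuous A β K))
    exact hc.aestronglyMeasurable.restrict
  · filter_upwards [MeasureTheory.ae_restrict_mem measurableSet_Ioi] with s hs
    have h1 : |MK A β K s i j| ≤ ‖MK A β K s‖ := matrix_abs_entry_le _ i j
    have h2 := MK_norm_le A β K (le_of_lt hs)
    rw [Real.norm_eq_abs]
    refine h1.trans (h2.trans ?_)
    have : (2 * ‖A‖ - β) * s = -(β - 2 * ‖A‖) * s := by ring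
    rw [this]

lemma MK_entry_tendsto (A : Matrix (Fin n) (Fin n) ℝ) {β : ℝ}
    (hb : 2 * ‖Matrix.toEuclideanCLM (𝕜 := ℝ) A‖ < β) (K : Matrix (Fin n) (Fin n) ℝ)
    (i j : Fin n) : Filter.Tendsto (fun s => MK A β K s i j) Filter.atTop (nhds 0) := by
  have hb' : (2 * ‖A‖ - β) < 0 := by
    have : 2 * ‖A‖ < β := hb
    linarith
  have hlim : Filter.Tendsto (fun s : ℝ => ‖K‖ * Real.exp ((2 * ‖A‖ - β) * s))
      Filter.atTop (nhds 0) := by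
    rw [show (0:ℝ) = ‖K‖ * 0 from (mul_zero _).symm]
    refine Filter.Tendsto.const_mul _ ?_
    refine Real.tendsto_exp_atBot.comp ?_
    exact Filter.Tendsto.const_mul_atTop_of_neg hb' Filter.tendsto_id
  refine squeeze_zero_norm' ?_ hlim
  filter_upwards [Filter.eventually_ge_atTop (0:ℝ)] with s hs
  exact (matrix_abs_entry_le _ i j).trans (MK_norm_le A β K hs)

lemma MK_zero (A : Matrix (Fin n) (Fin n) ℝ) (β : ℝ) (K : Matrix (Fin n) (Fin n) ℝ) :
    MK A β K 0 = K := by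
  simp [MK]

lemma MK_entry_hasDerivAt (A : Matrix (Fin n) (Fin n) ℝ) (β : ℝ)
    (K : Matrix (Fin n) (Fin n) ℝ) (s : ℝ) (i j : Fin n) :
    HasDerivAt (fun u => MK A β K u i j)
      ((-β • MK A β K s - (Aᵀ * MK A β K s + MK A β K s * A)) i j) s := by
  have h := (entryCLM i j).hasFDerivAt.comp_hasDerivAt s (hasDerivAt_MK A β K s)
  simp at h ⊢; exact h

lemma deriv_entry_eq (A : Matrix (Fin n) (Fin n) ℝ) (β : ℝ) (K : Matrix (Fin n) (Fin n) ℝ)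
    (i j : Fin n) :
    (fun s => (-β • MK A β K s - (Aᵀ * MK A β K s + MK A β K s * A)) i j)
      = fun s => -β * MK A β K s i j
          - ((∑ k, Aᵀ i k * MK A β K s k j) + (∑ k, MK A β K s i k * A k j)) := by
  funext s
  simp [Matrix.sub_apply, Matrix.add_apply, Matrix.smul_apply, Matrix.mul_apply, smul_eq_mul]

lemma deriv_entry_integrableOn (A : Matrix (Fin n) (Fin n) ℝ) {β : ℝ}
    (hb : 2 * ‖Matrix.toEuclideanCLM (𝕜 := ℝ) A‖ < β) (K : Matrix (Fin n) (Fin n) ℝ)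
    (i j : Fin n) :
    IntegrableOn (fun s => (-β • MK A β K s - (Aᵀ * MK A β K s + MK A β K s * A)) i j)
      (Ioi (0:ℝ)) := by
  rw [deriv_entry_eq]
  refine Integrable.sub ((MK_entry_integrableOn A hb K i j).const_mul _) ?_
  refine Integrable.add ?_ ?_
  · exact integrable_finset_sum _ fun k _ => (MK_entry_integrableOn A hb K k j).const_mul _
  · exact integrable_finset_sum _ fun k _ => (MK_entry_integrableOn A hb K i k).mul_const _

lemma FTC_entry (A : Matrix (Fin n) (Fin n) ℝ) {β : ℝ}
    (hb : 2 * ‖Matrix.toEuclideanCLM (𝕜 := ℝ) A‖ < β) (K : Matrix (Fin n) (Fin n) ℝ)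
    (i j : Fin n) :
    ∫ s in Ioi (0:ℝ), (-β • MK A β K s - (Aᵀ * MK A β K s + MK A β K s * A)) i j
      = - K i j := by
  have h := MeasureTheory.integral_Ioi_of_hasDerivAt_of_tendsto'
    (f := fun u => MK A β K u i j)
    (f' := fun s => (-β • MK A β K s - (Aᵀ * MK A β K s + MK A β K s * A)) i j)
    (a := 0) (m := 0)
    (fun s _ => MK_entry_hasDerivAt A β K s i j)
    (deriv_entry_integrableOn A hb K i j)
    (MK_entry_tendsto A hb K i j)
  rw [h]
  simp [MK_zero A β K]
lemma lyap_eq (A : Matrix (Fin n) (Fin n) ℝ) {β : ℝ}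
    (hb : 2 * ‖Matrix.toEuclideanCLM (𝕜 := ℝ) A‖ < β) (K : Matrix (Fin n) (Fin n) ℝ) :
    Aᵀ * (Matrix.of fun i j => ∫ s in Ioi (0:ℝ), MK A β K s i j)
      + (Matrix.of fun i j => ∫ s in Ioi (0:ℝ), MK A β K s i j) * A
      + β • (Matrix.of fun i j => ∫ s in Ioi (0:ℝ), MK A β K s i j) = K := by
  set SK : Matrix (Fin n) (Fin n) ℝ := Matrix.of fun i j => ∫ s in Ioi (0:ℝ), MK A β K s i j
    with hSK
  ext i j
  have hFTC := FTC_entry A hb K i j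
  rw [deriv_entry_eq] at hFTC
  have int1 : IntegrableOn (fun s => -β * MK A β K s i j) (Ioi (0:ℝ)) :=
    (MK_entry_integrableOn A hb K i j).const_mul _
  have int2 : IntegrableOn (fun s => ∑ k, Aᵀ i k * MK A β K s k j) (Ioi (0:ℝ)) :=
    integrable_finset_sum _ fun k _ => (MK_entry_integrableOn A hb K k j).const_mul _
  have int3 : IntegrableOn (fun s => ∑ k, MK A β K s i k * A k j) (Ioi (0:ℝ)) :=
    integrable_finset_sum _ fun k _ => (MK_entry_integrableOn A hb K i k).mul_const _
  have int23 : IntegrableOn (fun s => (∑ k, Aᵀ i k * MK A β K s k j)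
      + (∑ k, MK A β K s i k * A k j)) (Ioi (0:ℝ)) := int2.add int3
  rw [MeasureTheory.integral_sub int1 int23,
    MeasureTheory.integral_add int2 int3,
    MeasureTheory.integral_finset_sum _ (fun k _ => (MK_entry_integrableOn A hb K k j).const_mul _),
    MeasureTheory.integral_finset_sum _ (fun k _ => (MK_entry_integrableOn A hb K i k).mul_const _),
    MeasureTheory.integral_const_mul] at hFTC
  simp only [MeasureTheory.integral_const_mul, MeasureTheory.integral_mul_const] at hFTC
  have hL : (Aᵀ * SK + SK * A + β • SK) i j
      = (∑ k, Aᵀ i k * ∫ s in Ioi (0:ℝ), MK A β K s k j)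
        + (∑ k, (∫ s in Ioi (0:ℝ), MK A β K s i k) * A k j)
        + β * ∫ s in Ioi (0:ℝ), MK A β K s i j := by
    simp [hSK, Matrix.add_apply, Matrix.mul_apply, Matrix.smul_apply, smul_eq_mul]
  rw [hL]
  linarith [hFTC]

lemma MK_shift (A : Matrix (Fin n) (Fin n) ℝ) (β : ℝ) (S : Matrix (Fin n) (Fin n) ℝ) (s : ℝ) :
    Aᵀ * MK A β S s + MK A β S s * A + β • MK A β S s
      = MK A β (Aᵀ * S + S * A + β • S) s := by
  set E' := NormedSpace.exp ((-s) • Aᵀ) with hE'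
  set E := NormedSpace.exp ((-s) • A) with hE
  have hc1 : Aᵀ * E' = E' * Aᵀ := (((Commute.refl Aᵀ).smul_right (-s)).exp_right).eq
  have hc2 : A * E = E * A := (((Commute.refl A).smul_right (-s)).exp_right).eq
  have hc1' : ∀ X : Matrix (Fin n) (Fin n) ℝ, Aᵀ * (E' * X) = E' * (Aᵀ * X) := fun X => by
    rw [← Matrix.mul_assoc, hc1, Matrix.mul_assoc]
  have key : Aᵀ * (E' * S * E) + (E' * S * E) * A + β • (E' * S * E)
      = E' * (Aᵀ * S + S * A + β • S) * E := by
    simp only [Matrix.mul_add, Matrix.add_mul, Matrix.mul_smul, Matrix.smul_mul,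
      Matrix.mul_assoc]
    rw [hc1', ← hc2]
  rw [MK, MK]
  rw [Matrix.mul_smul, Matrix.smul_mul]
  rw [smul_comm β (Real.exp (-β * s)), ← smul_add, ← smul_add, key]

lemma lyap_unique (A : Matrix (Fin n) (Fin n) ℝ) {β : ℝ}
    (hb : 2 * ‖Matrix.toEuclideanCLM (𝕜 := ℝ) A‖ < β)
    (K S : Matrix (Fin n) (Fin n) ℝ) (hS : Aᵀ * S + S * A + β • S = K) (i j : Fin n) :
    S i j = ∫ s in Ioi (0:ℝ), MK A β K s i j := by
  have hder : ∀ s : ℝ, HasDerivAt (fun u => MK A β S u i j) (-(MK A β K s i j)) s := by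
    intro s
    have h := MK_entry_hasDerivAt A β S s i j
    have heq : -β • MK A β S s - (Aᵀ * MK A β S s + MK A β S s * A) = -(MK A β K s) := by
      rw [← hS, ← MK_shift A β S s]
      module
    rw [heq] at h
    simpa using h
  have h := MeasureTheory.integral_Ioi_of_hasDerivAt_of_tendsto'
    (f := fun u => MK A β S u i j) (f' := fun s => -(MK A β K s i j)) (a := 0) (m := 0)
    (fun s _ => hder s) ((MK_entry_integrableOn A hb K i j).neg)
    (MK_entry_tendsto A hb S i j)
  rw [MeasureTheory.integral_neg] at h
  simp only [MK_zero A β S, zero_sub] at h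
  linarith [h]

lemma raw_entry (A : Matrix (Fin n) (Fin n) ℝ) (C : Matrix (Fin 1) (Fin n) ℝ) (s : ℝ)
    (i j : Fin n) :
    (NormedSpace.exp ((-s) • Aᵀ) * Cᵀ * C * NormedSpace.exp ((-s) • A)) i j
      = (C 0 ᵥ* NormedSpace.exp ((-s) • A)) i * (C 0 ᵥ* NormedSpace.exp ((-s) • A)) j := by
  have ht : NormedSpace.exp ((-s) • Aᵀ) = (NormedSpace.exp ((-s) • A))ᵀ := by
    rw [← Matrix.transpose_smul, Matrix.exp_transpose]
  rw [ht]
  set E := NormedSpace.exp ((-s) • A)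
  simp only [Matrix.mul_apply, Matrix.transpose_apply, Matrix.vecMul, dotProduct,
    Fin.sum_univ_one, Finset.sum_mul, Finset.mul_sum]
  refine Finset.sum_congr rfl fun k _ => Finset.sum_congr rfl fun l _ => by ring

lemma integrand_eq (A : Matrix (Fin n) (Fin n) ℝ) (C : Matrix (Fin 1) (Fin n) ℝ) (β s : ℝ)
    (i j : Fin n) :
    Real.exp (-β * s) *
        ((NormedSpace.exp ((-s) • Aᵀ) * Cᵀ * C * NormedSpace.exp ((-s) • A)) i j)
      = MK A β (Cᵀ * C) s i j := by
  rw [MK]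
  simp [Matrix.smul_apply, smul_eq_mul, Matrix.mul_assoc]

lemma quad_integrable (A : Matrix (Fin n) (Fin n) ℝ) {β : ℝ}
    (hb : 2 * ‖Matrix.toEuclideanCLM (𝕜 := ℝ) A‖ < β) (C : Matrix (Fin 1) (Fin n) ℝ)
    (x : Fin n → ℝ) :
    IntegrableOn (fun s => Real.exp (-β * s) *
      (C 0 ⬝ᵥ (NormedSpace.exp ((-s) • A) *ᵥ x)) ^ 2) (Ioi (0:ℝ)) := by
  have h : (fun s => Real.exp (-β * s) * (C 0 ⬝ᵥ (NormedSpace.exp ((-s) • A) *ᵥ x)) ^ 2)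
      = fun s => ∑ i, ∑ j, x i * MK A β (Cᵀ * C) s i j * x j := by
    funext s
    simp_rw [← integrand_eq A C β s, raw_entry A C s]
    rw [dotProduct_mulVec]
    set w := C 0 ᵥ* NormedSpace.exp ((-s) • A)
    rw [dotProduct, sq, Finset.sum_mul_sum, Finset.mul_sum]
    refine Finset.sum_congr rfl fun i _ => ?_
    rw [Finset.mul_sum]
    refine Finset.sum_congr rfl fun j _ => by ring
  rw [h]
  exact integrable_finset_sum _ fun i _ => integrable_finset_sum _ fun j _ =>
    ((MK_entry_integrableOn A hb (Cᵀ * C) i j).const_mul _).mul_const _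

lemma quad_eq (A : Matrix (Fin n) (Fin n) ℝ) {β : ℝ}
    (hb : 2 * ‖Matrix.toEuclideanCLM (𝕜 := ℝ) A‖ < β) (C : Matrix (Fin 1) (Fin n) ℝ)
    (x : Fin n → ℝ) :
    x ⬝ᵥ ((Matrix.of fun i j => ∫ s in Ioi (0:ℝ), MK A β (Cᵀ * C) s i j) *ᵥ x)
      = ∫ s in Ioi (0:ℝ), Real.exp (-β * s) *
          (C 0 ⬝ᵥ (NormedSpace.exp ((-s) • A) *ᵥ x)) ^ 2 := by
  have h : (fun s => Real.exp (-β * s) * (C 0 ⬝ᵥ (NormedSpace.exp ((-s) • A) *ᵥ x)) ^ 2)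
      = fun s => ∑ i, ∑ j, x i * MK A β (Cᵀ * C) s i j * x j := by
    funext s
    simp_rw [← integrand_eq A C β s, raw_entry A C s]
    rw [dotProduct_mulVec]
    set w := C 0 ᵥ* NormedSpace.exp ((-s) • A)
    rw [dotProduct, sq, Finset.sum_mul_sum, Finset.mul_sum]
    refine Finset.sum_congr rfl fun i _ => ?_
    rw [Finset.mul_sum]
    refine Finset.sum_congr rfl fun j _ => by ring
  rw [h]
  rw [MeasureTheory.integral_finset_sum _ (fun i _ => integrable_finset_sum _ fun j _ =>
    ((MK_entry_integrableOn A hb (Cᵀ * C) i j).const_mul _).mul_const _)]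
  have : ∀ i, (∫ s in Ioi (0:ℝ), ∑ j, x i * MK A β (Cᵀ * C) s i j * x j)
      = ∑ j, x i * (∫ s in Ioi (0:ℝ), MK A β (Cᵀ * C) s i j) * x j := by
    intro i
    rw [MeasureTheory.integral_finset_sum _ (fun j _ =>
      ((MK_entry_integrableOn A hb (Cᵀ * C) i j).const_mul _).mul_const _)]
    refine Finset.sum_congr rfl fun j _ => ?_
    rw [MeasureTheory.integral_mul_const, MeasureTheory.integral_const_mul]
  simp_rw [this]
  simp [dotProduct, Matrix.mulVec, Matrix.of_apply, Finset.mul_sum]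
  refine Finset.sum_congr rfl fun i _ => Finset.sum_congr rfl fun j _ => by ring

lemma cont_zero_of_integral_zero {f : ℝ → ℝ} (hc : Continuous f) (hnn : ∀ s, 0 ≤ f s)
    (hint : IntegrableOn f (Ioi (0:ℝ))) (hz : ∫ s in Ioi (0:ℝ), f s = 0) :
    ∀ s ∈ Ioi (0:ℝ), f s = 0 := by
  have h0 : f =ᵐ[MeasureTheory.volume.restrict (Ioi (0:ℝ))] 0 :=
    (MeasureTheory.integral_eq_zero_iff_of_nonneg (fun s => hnn s) hint).mp hz
  have h1 : ∀ᵐ s ∂(MeasureTheory.volume : MeasureTheory.Measure ℝ),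
      s ∈ Ioi (0:ℝ) → f s = 0 := by
    rw [← MeasureTheory.ae_restrict_iff' measurableSet_Ioi]
    exact h0
  by_contra hcon
  push_neg at hcon
  obtain ⟨s0, hs0, hfs0⟩ := hcon
  have hpos : 0 < f s0 := lt_of_le_of_ne (hnn s0) (Ne.symm hfs0)
  set U : Set ℝ := Ioi 0 ∩ f ⁻¹' (Ioi (f s0 / 2)) with hU
  have hUopen : IsOpen U := isOpen_Ioi.inter (isOpen_Ioi.preimage hc)
  have hUne : U.Nonempty := ⟨s0, hs0, by simpa using by linarith⟩
  have hUsub : U ⊆ {s | ¬ (s ∈ Ioi (0:ℝ) → f s = 0)} := by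
    intro s ⟨hs1, hs2⟩
    simp only [Set.mem_setOf_eq, Classical.not_imp]
    refine ⟨hs1, fun h0 => ?_⟩
    have h2 : f s0 / 2 < f s := hs2
    rw [h0] at h2
    linarith
  have hzero : MeasureTheory.volume {s | ¬ (s ∈ Ioi (0:ℝ) → f s = 0)} = 0 := h1
  have := MeasureTheory.measure_mono_null hUsub hzero
  exact ((hUopen.measure_pos MeasureTheory.volume hUne).ne' this).elim

noncomputable def obsCLM (c x : Fin n → ℝ) (B : Matrix (Fin n) (Fin n) ℝ) :
    Matrix (Fin n) (Fin n) ℝ →L[ℝ] ℝ :=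
  LinearMap.toContinuousLinearMap
    { toFun := fun X => c ⬝ᵥ ((X * B) *ᵥ x)
      map_add' := fun X Y => by
        simp [Matrix.add_mul, Matrix.add_mulVec, dotProduct_add]
      map_smul' := fun r X => by
        simp [Matrix.smul_mul, Matrix.smul_mulVec, dotProduct_smul, smul_eq_mul] }

@[simp] lemma obsCLM_apply (c x : Fin n → ℝ) (B X : Matrix (Fin n) (Fin n) ℝ) :
    obsCLM c x B X = c ⬝ᵥ ((X * B) *ᵥ x) := rfl

lemma exp_vanish (A : Matrix (Fin n) (Fin n) ℝ) (c x : Fin n → ℝ)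
    (h : ∀ t ∈ Ioi (0:ℝ), c ⬝ᵥ (NormedSpace.exp (t • A) *ᵥ x) = 0) :
    ∀ t : ℝ, c ⬝ᵥ (NormedSpace.exp (t • A) *ᵥ x) = 0 := by
  set φ : ℕ → ℝ → ℝ := fun k t => c ⬝ᵥ ((NormedSpace.exp (t • A) * A ^ k) *ᵥ x) with hφ
  have hder : ∀ k t, HasDerivAt (φ k) (φ (k+1) t) t := by
    intro k t
    have hD := hasDerivAt_exp_smul_const (𝕂 := ℝ) A t
    have h2 := (obsCLM c x (A ^ k)).hasFDerivAt.comp_hasDerivAt t hD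
    have h3 : obsCLM c x (A ^ k) (NormedSpace.exp (t • A) * A) = φ (k+1) t := by
      rw [obsCLM_apply, hφ]
      rw [Matrix.mul_assoc, ← pow_succ']
    rw [h3] at h2
    exact h2
  have hvan : ∀ k, ∀ t ∈ Ioi (0:ℝ), φ k t = 0 := by
    intro k
    induction k with
    | zero => intro t ht; simpa [hφ] using h t ht
    | succ k ih =>
      intro t ht
      have hev : φ k =ᶠ[nhds t] (fun _ => (0:ℝ)) :=
        Filter.eventuallyEq_of_mem (isOpen_Ioi.mem_nhds ht) ih
      have hz : HasDerivAt (φ k) 0 t :=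
        (hasDerivAt_const t (0:ℝ)).congr_of_eventuallyEq hev
      exact ((hder k t).unique hz)
  set y : Fin n → ℝ := NormedSpace.exp ((1:ℝ) • A) *ᵥ x with hy
  have hyk : ∀ k, c ⬝ᵥ ((A ^ k) *ᵥ y) = 0 := by
    intro k
    have hcom : A ^ k * NormedSpace.exp ((1:ℝ) • A)
        = NormedSpace.exp ((1:ℝ) • A) * A ^ k :=
      ((((Commute.refl A).pow_left k).smul_right (1:ℝ)).exp_right).eq
    rw [hy, Matrix.mulVec_mulVec, hcom]
    exact hvan k 1 (by norm_num)
  have hyt : ∀ u : ℝ, c ⬝ᵥ (NormedSpace.exp (u • A) *ᵥ y) = 0 := by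
    intro u
    have hexp : NormedSpace.exp (u • A)
        = ∑' k : ℕ, ((k.factorial : ℝ)⁻¹) • (u • A) ^ k := by
      rw [NormedSpace.exp_eq_tsum (𝕂 := ℝ)]
    have hCLM := (obsCLM c y 1).map_tsum (NormedSpace.expSeries_summable' (𝕂 := ℝ) (u • A))
    have h1 : c ⬝ᵥ (NormedSpace.exp (u • A) *ᵥ y)
        = obsCLM c y 1 (NormedSpace.exp (u • A)) := by simp
    rw [h1, hexp, hCLM]
    have hterm : ∀ k : ℕ, obsCLM c y 1 (((k.factorial : ℝ)⁻¹) • (u • A) ^ k) = 0 := by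
      intro k
      rw [_root_.map_smul, obsCLM_apply, Matrix.mul_one, smul_pow, Matrix.smul_mulVec,
        dotProduct_smul, hyk k]
      simp
    rw [tsum_congr hterm, tsum_zero]
  intro t
  have hcomm : Commute ((t - 1) • A) ((1:ℝ) • A) :=
    ((Commute.refl A).smul_right (1:ℝ)).smul_left (t - 1)
  have hsplit : NormedSpace.exp (t • A)
      = NormedSpace.exp ((t - 1) • A) * NormedSpace.exp ((1:ℝ) • A) := by
    letI : NormedAlgebra ℚ (Matrix (Fin n) (Fin n) ℝ) := NormedAlgebra.restrictScalars ℚ ℝ _; rw [← NormedSpace.exp_add_of_commute hcomm, ← add_smul]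
    norm_num
  rw [hsplit, ← Matrix.mulVec_mulVec]
  exact hyt (t - 1)

lemma lyap_main {n : ℕ} (hn : 1 ≤ n) (A : Matrix (Fin n) (Fin n) ℝ)
    (C : Matrix (Fin 1) (Fin n) ℝ)
    (β : ℝ) (hβ : 2 * ‖Matrix.toEuclideanCLM (𝕜 := ℝ) A‖ < β)
    (Sinf : Matrix (Fin n) (Fin n) ℝ)
    (hSinf : Sinf = Matrix.of fun i j => ∫ s in Set.Ioi (0:ℝ),
      Real.exp (-β * s) *
        ((NormedSpace.exp ((-s) • Aᵀ) * Cᵀ * C * NormedSpace.exp ((-s) • A)) i j)) :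
    (∀ i j, MeasureTheory.IntegrableOn (fun s => Real.exp (-β * s) *
        ((NormedSpace.exp ((-s) • Aᵀ) * Cᵀ * C * NormedSpace.exp ((-s) • A)) i j))
        (Set.Ioi (0:ℝ)))
    ∧ Sinfᵀ = Sinf
    ∧ Aᵀ * Sinf + Sinf * A + β • Sinf = Cᵀ * C
    ∧ (∀ S : Matrix (Fin n) (Fin n) ℝ, Sᵀ = S → Aᵀ * S + S * A + β • S = Cᵀ * C → S = Sinf)
    ∧ Sinf.PosSemidef
    ∧ (Sinf.PosDef ↔ ∀ x : Fin n → ℝ,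
        (∀ t : ℝ, 0 ≤ t → C *ᵥ (NormedSpace.exp (t • A) *ᵥ x) = 0) → x = 0) := by
  have hS2 : Sinf = Matrix.of fun i j => ∫ s in Ioi (0:ℝ), MK A β (Cᵀ * C) s i j := by
    rw [hSinf]
    ext i j
    simp only [Matrix.of_apply]
    congr 1
    funext s
    exact integrand_eq A C β s i j
  have hsym : Sinfᵀ = Sinf := by
    rw [hS2]
    ext i j
    simp only [Matrix.transpose_apply, Matrix.of_apply]
    congr 1
    funext s
    rw [← integrand_eq A C β s j i, ← integrand_eq A C β s i j, raw_entry, raw_entry]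
    ring
  -- observability helper conversions
  have hdot : ∀ (v : Fin n → ℝ) (X : Matrix (Fin n) (Fin n) ℝ),
      (C *ᵥ (X *ᵥ v)) 0 = C 0 ⬝ᵥ (X *ᵥ v) := fun v X => rfl
  have hpsd : Sinf.PosSemidef := by
    rw [Matrix.posSemidef_iff_dotProduct_mulVec]
    constructor
    · show Sinfᴴ = Sinf
      have hct : Sinfᴴ = Sinfᵀ := by
        ext i j; simp [Matrix.conjTranspose_apply]
      rw [hct, hsym]
    · intro v
      rw [star_trivial, hS2, quad_eq A hβ C v]
      exact MeasureTheory.integral_nonneg fun s => by positivity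
  refine ⟨?_, hsym, ?_, ?_, hpsd, ?_⟩
  · intro i j
    have hfun : (fun s => Real.exp (-β * s) *
        ((NormedSpace.exp ((-s) • Aᵀ) * Cᵀ * C * NormedSpace.exp ((-s) • A)) i j))
        = fun s => MK A β (Cᵀ * C) s i j := funext fun s => integrand_eq A C β s i j
    rw [hfun]
    exact MK_entry_integrableOn A hβ (Cᵀ * C) i j
  · rw [hS2]
    exact lyap_eq A hβ (Cᵀ * C)
  · intro S _ heqS
    ext i j
    rw [hS2]
    simp only [Matrix.of_apply]
    exact lyap_unique A hβ (Cᵀ * C) S heqS i j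
  · constructor
    · -- PosDef → observable
      intro hpd v hv
      by_contra hv0
      have hall : ∀ t : ℝ, C 0 ⬝ᵥ (NormedSpace.exp (t • A) *ᵥ v) = 0 := by
        refine exp_vanish A (C 0) v fun t ht => ?_
        have h0 := hv t (le_of_lt ht)
        have := congrFun h0 0
        rw [← hdot v _]
        simpa using this
      have hq : v ⬝ᵥ (Sinf *ᵥ v) = 0 := by
        rw [hS2, quad_eq A hβ C v]
        have : (fun s => Real.exp (-β * s) *
            (C 0 ⬝ᵥ (NormedSpace.exp ((-s) • A) *ᵥ v)) ^ 2) = fun _ => (0:ℝ) := by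
          funext s
          rw [hall (-s)]
          ring
        rw [this]
        simp
      have hlt := (Matrix.posDef_iff_dotProduct_mulVec.mp hpd).2 hv0
      rw [star_trivial, hq] at hlt
      exact lt_irrefl 0 hlt
    · -- observable → PosDef
      intro hobs
      refine Matrix.posDef_iff_dotProduct_mulVec.mpr ⟨hpsd.1, fun v hv0 => ?_⟩
      rw [star_trivial]
      have hge : (0:ℝ) ≤ v ⬝ᵥ (Sinf *ᵥ v) := by
        have := (Matrix.posSemidef_iff_dotProduct_mulVec.mp hpsd).2 v
        rwa [star_trivial] at this
      rcases lt_or_eq_of_le hge with h | h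
      · exact h
      · exfalso
        -- quadratic form is zero; derive v = 0
        have hcont : Continuous (fun s => Real.exp (-β * s) *
            (C 0 ⬝ᵥ (NormedSpace.exp ((-s) • A) *ᵥ v)) ^ 2) := by
          have he : Continuous fun s : ℝ => NormedSpace.exp ((-s) • A) := by
            letI : NormedAlgebra ℚ (Matrix (Fin n) (Fin n) ℝ) := NormedAlgebra.restrictScalars ℚ ℝ _; exact NormedSpace.exp_continuous.comp (continuous_neg.smul continuous_const)
          have hd : Continuous fun s : ℝ =>
              C 0 ⬝ᵥ (NormedSpace.exp ((-s) • A) *ᵥ v) := by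
            have h1 := ((obsCLM (C 0) v 1).continuous).comp he
            have h2 : (fun s : ℝ => obsCLM (C 0) v 1 (NormedSpace.exp ((-s) • A)))
                = fun s : ℝ => C 0 ⬝ᵥ (NormedSpace.exp ((-s) • A) *ᵥ v) := by
              funext s
              rw [obsCLM_apply, Matrix.mul_one]
            rw [← h2]
            exact h1
          exact ((Real.continuous_exp.comp (continuous_const.mul continuous_id))).mul (hd.pow 2)
        have hzero := cont_zero_of_integral_zero hcont (fun s => by positivity)
          (quad_integrable A hβ C v)
          (by rw [← quad_eq A hβ C v, ← hS2]; exact h.symm)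
        have hvanneg : ∀ t ∈ Ioi (0:ℝ), C 0 ⬝ᵥ (NormedSpace.exp (t • (-A)) *ᵥ v) = 0 := by
          intro t ht
          have := hzero t ht
          have h2 : (C 0 ⬝ᵥ (NormedSpace.exp ((-t) • A) *ᵥ v)) ^ 2 = 0 := by
            have hexp := Real.exp_pos (-β * t)
            by_contra hne
            have : 0 < (C 0 ⬝ᵥ (NormedSpace.exp ((-t) • A) *ᵥ v)) ^ 2 :=
              lt_of_le_of_ne (sq_nonneg _) (Ne.symm hne)
            nlinarith
          have h3 : C 0 ⬝ᵥ (NormedSpace.exp ((-t) • A) *ᵥ v) = 0 :=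
            (pow_eq_zero_iff two_ne_zero).mp h2
          rw [show t • (-A) = (-t) • A by rw [smul_neg, neg_smul]]
          exact h3
        have hallneg := exp_vanish (-A) (C 0) v hvanneg
        have : v = 0 := by
          refine hobs v fun t ht => ?_
          funext i
          have hi : i = 0 := Subsingleton.elim i 0
          subst hi
          rw [hdot v _]
          have := hallneg (-t)
          rw [show (-t) • (-A) = t • A by rw [smul_neg, neg_smul, neg_neg]] at this
          simpa using this
        exact hv0 this

end core


end LyapunovAux

/-- For `β > 2‖A‖` (operator norm), the matrix
`Sinf = ∫₀^∞ e^{−βs} e^{−sAᵀ} CᵀC e^{−sA} ds` converges (entrywise), is the unique symmetric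
solution of the Lyapunov equation `AᵀS + SA + βS = CᵀC`, is positive semidefinite, and is
positive definite iff the pair `(C, A)` is observable. -/
theorem lyapunov_equation_solution
    {n : ℕ} (hn : 1 ≤ n) (A : Matrix (Fin n) (Fin n) ℝ) (C : Matrix (Fin 1) (Fin n) ℝ)
    (β : ℝ) (hβ : 2 * ‖Matrix.toEuclideanCLM (𝕜 := ℝ) A‖ < β)
    (Sinf : Matrix (Fin n) (Fin n) ℝ)
    (hSinf : Sinf = Matrix.of fun i j => ∫ s in Set.Ioi (0:ℝ),
      Real.exp (-β * s) *
        ((NormedSpace.exp ((-s) • Aᵀ) * Cᵀ * C * NormedSpace.exp ((-s) • A)) i j)) :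
    (∀ i j, MeasureTheory.IntegrableOn (fun s => Real.exp (-β * s) *
        ((NormedSpace.exp ((-s) • Aᵀ) * Cᵀ * C * NormedSpace.exp ((-s) • A)) i j))
        (Set.Ioi (0:ℝ)))
    ∧ Sinfᵀ = Sinf
    ∧ Aᵀ * Sinf + Sinf * A + β • Sinf = Cᵀ * C
    ∧ (∀ S : Matrix (Fin n) (Fin n) ℝ, Sᵀ = S → Aᵀ * S + S * A + β • S = Cᵀ * C → S = Sinf)
    ∧ Sinf.PosSemidef
    ∧ (Sinf.PosDef ↔ ∀ x : Fin n → ℝ,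
        (∀ t : ℝ, 0 ≤ t → C *ᵥ (NormedSpace.exp (t • A) *ᵥ x) = 0) → x = 0) := by
  exact lyap_main hn A C β hβ Sinf hSinf
end

section
/- Let n ≥ 1, let V : ℝⁿ → ℝ be continuously differentiable with V ≥ 0 and V(0) = 0, and for ρ > 0 write D(ρ) := {x ∈ ℝⁿ : V(x) ≤ ρ}. Let R > 0, η > 0, A₀ ∈ ℝ^{n×n} with a₀ := ‖A₀‖, and t_obs > 0. Assume D((1+η)R) is bounded, let d := diam D(R), let m := sup of |∇V| over the closed convex hull of D((1+η)R), and assume m·(a₀d + R)·t_obs·e^{a₀ t_obs} < ηR. Then for every differentiable x : [τ, τ+t_obs] → ℝⁿ with |x'(t) − A₀x(t)| ≤ R for all t ∈ [τ, τ+t_obs] and V(x(τ)) ≤ R, one has V(x(t)) < (1+η)R for all t ∈ [τ, τ+t_obs]. -/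
open Matrix Set

/-- Inclusion of `Fin n → ℝ` into `EuclideanSpace ℝ (Fin n)` (a definitional identity,
used to select the Euclidean norm). -/
def toEuc {n : ℕ} (v : Fin n → ℝ) : EuclideanSpace ℝ (Fin n) := WithLp.toLp 2 v

lemma toEuclideanCLM_apply_eq {n : ℕ} (A : Matrix (Fin n) (Fin n) ℝ)
    (v : EuclideanSpace ℝ (Fin n)) :
    Matrix.toEuclideanCLM (𝕜 := ℝ) A v = toEuc (A *ᵥ (v : Fin n → ℝ)) := by
  have h := Matrix.ofLp_toEuclideanCLM (𝕜 := ℝ) A v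
  have h2 := congrArg (WithLp.toLp 2) h
  rw [WithLp.toLp_ofLp] at h2
  exact h2.trans rfl

lemma gronwall_aux {a₀ d R Δ T : ℝ} (ha₀ : 0 ≤ a₀) (hd : 0 ≤ d) (hR : 0 ≤ R)
    (hΔ : 0 ≤ Δ) (hΔT : Δ ≤ T) :
    a₀ * gronwallBound d a₀ R Δ + R ≤ (a₀ * d + R) * Real.exp (a₀ * T) := by
  have hexp1 : (1 : ℝ) ≤ Real.exp (a₀ * Δ) := by
    rw [← Real.exp_zero]
    exact Real.exp_le_exp.2 (by positivity)
  have hexp2 : Real.exp (a₀ * Δ) ≤ Real.exp (a₀ * T) := by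
    exact Real.exp_le_exp.2 (by nlinarith)
  have hco : 0 ≤ a₀ * d + R := by positivity
  rcases eq_or_lt_of_le ha₀ with h0 | h0
  · rw [← h0]
    simp [gronwallBound_K0]
  · rw [gronwallBound_of_K_ne_0 (ne_of_gt h0)]
    have : a₀ * (d * Real.exp (a₀ * Δ) + R / a₀ * (Real.exp (a₀ * Δ) - 1)) + R
        = (a₀ * d + R) * Real.exp (a₀ * Δ) := by
      field_simp
      ring
    rw [this]
    exact mul_le_mul_of_nonneg_left hexp2 hco

/-- Sublevel sets of a Lyapunov function grow at most by a factor `(1+η)`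
during an observation mode: under the quantitative condition
`m(a₀d + R)t_obs e^{a₀t_obs} < ηR` (with `d = diam D(R)`, `m` the sup of `|∇V|` on the
closed convex hull of `D((1+η)R)`), any trajectory with `|x' − A₀x| ≤ R` starting in
`D(R)` stays in the open sublevel set `{V < (1+η)R}` on `[τ, τ+t_obs]`. -/
theorem lyapunov_small_increase_observation_mode
    {n : ℕ} (hn : 1 ≤ n)
    (V : EuclideanSpace ℝ (Fin n) → ℝ) (hV : ContDiff ℝ 1 V)
    (hVnonneg : ∀ x, 0 ≤ V x) (hV0 : V 0 = 0)
    (R η : ℝ) (hR : 0 < R) (hη : 0 < η)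
    (A₀ : Matrix (Fin n) (Fin n) ℝ) (a₀ : ℝ)
    (ha₀ : a₀ = ‖Matrix.toEuclideanCLM (𝕜 := ℝ) A₀‖)
    (t_obs : ℝ) (htobs : 0 < t_obs)
    (hbdd : Bornology.IsBounded {x : EuclideanSpace ℝ (Fin n) | V x ≤ (1 + η) * R})
    (d m : ℝ)
    (hd : d = Metric.diam {x : EuclideanSpace ℝ (Fin n) | V x ≤ R})
    (hm : m = sSup ((fun x => ‖gradient V x‖) ''
      closure (convexHull ℝ {x : EuclideanSpace ℝ (Fin n) | V x ≤ (1 + η) * R})))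
    (hkey : m * (a₀ * d + R) * t_obs * Real.exp (a₀ * t_obs) < η * R)
    (τ : ℝ) (x x' : ℝ → EuclideanSpace ℝ (Fin n))
    (hx : ∀ t ∈ Set.Icc τ (τ + t_obs), HasDerivWithinAt x (x' t) (Set.Icc τ (τ + t_obs)) t)
    (hb : ∀ t ∈ Set.Icc τ (τ + t_obs),
      ‖x' t - toEuc (A₀ *ᵥ x t)‖ ≤ R)
    (hinit : V (x τ) ≤ R) :
    ∀ t ∈ Set.Icc τ (τ + t_obs), V (x t) < (1 + η) * R := by
  set b := τ + t_obs with hbdef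
  have ha₀0 : 0 ≤ a₀ := ha₀ ▸ norm_nonneg _
  have hd0 : 0 ≤ d := hd ▸ Metric.diam_nonneg
  -- norm of the gradient equals the norm of the derivative
  have hgradnorm : ∀ y, ‖gradient V y‖ = ‖fderiv ℝ V y‖ := by
    intro y
    rw [gradient]
    exact LinearIsometryEquiv.norm_map _ _
  -- pointwise velocity bound
  have hxb : ∀ t ∈ Icc τ b, ‖x' t‖ ≤ a₀ * ‖x t‖ + R := by
    intro t ht
    have h1 : ‖toEuc (A₀ *ᵥ (x t : Fin n → ℝ))‖ ≤ a₀ * ‖x t‖ := by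
      rw [← toEuclideanCLM_apply_eq, ha₀]
      exact (Matrix.toEuclideanCLM (𝕜 := ℝ) A₀).le_opNorm (x t)
    calc ‖x' t‖ = ‖x' t - toEuc (A₀ *ᵥ x t) + toEuc (A₀ *ᵥ x t)‖ := by rw [sub_add_cancel]
      _ ≤ ‖x' t - toEuc (A₀ *ᵥ x t)‖ + ‖toEuc (A₀ *ᵥ (x t : Fin n → ℝ))‖ := norm_add_le _ _
      _ ≤ R + a₀ * ‖x t‖ := add_le_add (hb t ht) h1
      _ = a₀ * ‖x t‖ + R := by ring
  have hcont : ContinuousOn x (Icc τ b) := fun t ht => (hx t ht).continuousWithinAt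
  -- `x τ` is within `d` of the origin
  have hDRsub : {y : EuclideanSpace ℝ (Fin n) | V y ≤ R} ⊆
      {y : EuclideanSpace ℝ (Fin n) | V y ≤ (1 + η) * R} := by
    intro y hy
    have : R ≤ (1 + η) * R := by nlinarith
    exact le_trans hy this
  have hDbdd : Bornology.IsBounded {y : EuclideanSpace ℝ (Fin n) | V y ≤ R} :=
    hbdd.subset hDRsub
  have h0mem : (0 : EuclideanSpace ℝ (Fin n)) ∈ {y : EuclideanSpace ℝ (Fin n) | V y ≤ R} := by
    simp only [mem_setOf_eq, hV0]; exact hR.le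
  have hxτd : ‖x τ‖ ≤ d := by
    have := Metric.dist_le_diam_of_mem hDbdd (hinit : x τ ∈ _) h0mem
    rw [dist_zero_right] at this
    rw [hd]
    exact this
  -- Grönwall
  have hright : ∀ t ∈ Ico τ b, HasDerivWithinAt x (x' t) (Ici t) t := by
    intro t ht
    exact (hx t (Ico_subset_Icc_self ht)).mono_of_mem_nhdsWithin (Icc_mem_nhdsGE_of_mem ht)
  have hgron : ∀ t ∈ Icc τ b, ‖x t‖ ≤ gronwallBound d a₀ R (t - τ) :=
    norm_le_gronwallBound_of_norm_deriv_right_le hcont hright hxτd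
      (fun t ht => hxb t (Ico_subset_Icc_self ht))
  -- derived velocity bound
  set C' : ℝ := (a₀ * d + R) * Real.exp (a₀ * t_obs) with hC'
  have hC'0 : 0 ≤ C' := by positivity
  have hx'le : ∀ t ∈ Icc τ b, ‖x' t‖ ≤ C' := by
    intro t ht
    have h1 := hxb t ht
    have h2 : a₀ * ‖x t‖ + R ≤ a₀ * gronwallBound d a₀ R (t - τ) + R := by
      have := hgron t ht
      nlinarith
    have h3 := gronwall_aux ha₀0 hd0 hR.le (by linarith [ht.1] : (0:ℝ) ≤ t - τ)
      (by have := ht.2; simp only [hbdef] at this ⊢; linarith : t - τ ≤ t_obs)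
    linarith
  -- the sup `m` bounds the gradient on the closed convex hull
  set K := closure (convexHull ℝ {y : EuclideanSpace ℝ (Fin n) | V y ≤ (1 + η) * R}) with hK
  have hKcpt : IsCompact K := ((isBounded_convexHull).2 hbdd).isCompact_closure
  have hgcont : Continuous fun y : EuclideanSpace ℝ (Fin n) => ‖gradient V y‖ := by
    have h1 : Continuous fun y : EuclideanSpace ℝ (Fin n) => ‖fderiv ℝ V y‖ :=
      (hV.continuous_fderiv one_ne_zero).norm
    have : (fun y : EuclideanSpace ℝ (Fin n) => ‖gradient V y‖)
        = fun y => ‖fderiv ℝ V y‖ := funext fun y => hgradnorm y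
    rw [this]; exact h1
  have hbddA : BddAbove ((fun y => ‖gradient V y‖) '' K) :=
    (hKcpt.image hgcont).bddAbove
  have hmub : ∀ y ∈ K, ‖gradient V y‖ ≤ m := fun y hy =>
    hm ▸ le_csSup hbddA (mem_image_of_mem _ hy)
  have h0K : (0 : EuclideanSpace ℝ (Fin n)) ∈ K :=
    subset_closure (subset_convexHull ℝ _ (hDRsub h0mem))
  have hm0 : 0 ≤ m := le_trans (norm_nonneg _) (hmub 0 h0K)
  -- main argument by contradiction
  by_contra hcon
  push_neg at hcon
  obtain ⟨t₀, ht₀, ht₀V⟩ := hcon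
  set S := {t | t ∈ Icc τ b ∧ (1 + η) * R ≤ V (x t)} with hS
  have hVxcont : ContinuousOn (fun t => V (x t)) (Icc τ b) :=
    hV.continuous.comp_continuousOn hcont
  have hScl : IsClosed S := by
    have h := hVxcont.preimage_isClosed_of_isClosed isClosed_Icc
      (isClosed_Ici (a := (1 + η) * R))
    have heq : S = Icc τ b ∩ (fun t => V (x t)) ⁻¹' Ici ((1 + η) * R) := by
      ext t; simp [hS]
    rw [heq]; exact h
  have hSne : S.Nonempty := ⟨t₀, ht₀, ht₀V⟩
  have hSbdd : BddBelow S := ⟨τ, fun t ht => ht.1.1⟩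
  set t₁ := sInf S with ht₁def
  have ht₁S : t₁ ∈ S := hScl.csInf_mem hSne hSbdd
  obtain ⟨ht₁mem, ht₁V⟩ := ht₁S
  have hlt : ∀ s ∈ Ico τ t₁, V (x s) < (1 + η) * R := by
    intro s hs
    by_contra h
    push_neg at h
    have hsS : s ∈ S := ⟨⟨hs.1, hs.2.le.trans ht₁mem.2⟩, h⟩
    exact absurd (csInf_le hSbdd hsS) (not_le.2 hs.2)
  have hIccsub : Icc τ t₁ ⊆ Icc τ b := Icc_subset_Icc le_rfl ht₁mem.2
  have hg : ∀ s ∈ Icc τ t₁, HasDerivWithinAt (fun t => V (x t))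
      (fderiv ℝ V (x s) (x' s)) (Icc τ t₁) s := by
    intro s hs
    exact (hV.differentiable one_ne_zero (x s)).hasFDerivAt.comp_hasDerivWithinAt s
      ((hx s (hIccsub hs)).mono hIccsub)
  have hgbd : ∀ s ∈ Ico τ t₁, ‖fderiv ℝ V (x s) (x' s)‖ ≤ m * C' := by
    intro s hs
    have hsIcc : s ∈ Icc τ b := hIccsub ⟨hs.1, hs.2.le⟩
    have hxK : x s ∈ K :=
      subset_closure (subset_convexHull ℝ _ (le_of_lt (hlt s hs)))
    calc ‖fderiv ℝ V (x s) (x' s)‖ ≤ ‖fderiv ℝ V (x s)‖ * ‖x' s‖ :=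
          (fderiv ℝ V (x s)).le_opNorm _
      _ ≤ m * C' := by
          have h1 : ‖fderiv ℝ V (x s)‖ ≤ m := (hgradnorm (x s)) ▸ hmub _ hxK
          have h2 := hx'le s hsIcc
          nlinarith [norm_nonneg (fderiv ℝ V (x s)), norm_nonneg (x' s)]
  have hMVT := norm_image_sub_le_of_norm_deriv_le_segment' hg hgbd t₁
    (right_mem_Icc.2 ht₁mem.1)
  rw [Real.norm_eq_abs] at hMVT
  have hVle : V (x t₁) - V (x τ) ≤ m * C' * (t₁ - τ) := le_of_abs_le hMVT
  have ht₁le : t₁ - τ ≤ t_obs := by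
    have := ht₁mem.2; simp only [hbdef] at this; linarith
  have hCt : m * C' * (t₁ - τ) ≤ m * C' * t_obs :=
    mul_le_mul_of_nonneg_left ht₁le (by positivity)
  have hfinal : m * C' * t_obs = m * (a₀ * d + R) * t_obs * Real.exp (a₀ * t_obs) := by
    rw [hC']; ring
  nlinarith [hVnonneg (x t₁)]
end
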